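/- arXiv:1601.01101 — 9 statements merged into one kernel-verified Lean document; each statement's English description precedes it below -/
import Mathlib

section
/- Let R be a ring such that every quasi-injective right R-module is injective. Then R is a right noetherian right V-ring, and every semisimple right R-module is injective. -/
universe u v

open CategoryTheory

section ModuleDefs

variable (R : Type u) [Ring R]

/-- `N` is an essential submodule of `D` (inside the ambient module `M`). -/
def IsEssentialIn {M : Type v} [AddCommGroup M] [Module R M] (N D : Submodule R M) : Prop :=
  N ≤ D ∧ ∀ K : Submodule R M, K ≤ D → K ≠ ⊥ → N ⊓ K ≠ ⊥

/-- `N` is a direct summand of the ambient module. -/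
def IsSummand {M : Type v} [AddCommGroup M] [Module R M] (N : Submodule R M) : Prop :=
  ∃ N' : Submodule R M, IsCompl N N'

/-- C1 (extending) module: every submodule is essential in a direct summand. -/
def IsC1Module (M : Type v) [AddCommGroup M] [Module R M] : Prop :=
  ∀ N : Submodule R M, ∃ D : Submodule R M, IsSummand R D ∧ IsEssentialIn R N D

/-- C2 module: every submodule isomorphic to a direct summand is a direct summand. -/
def IsC2Module (M : Type v) [AddCommGroup M] [Module R M] : Prop :=
  ∀ A B : Submodule R M, IsSummand R B → Nonempty (A ≃ₗ[R] B) → IsSummand R A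

/-- C3 module: the sum of two direct summands intersecting trivially is a direct summand. -/
def IsC3Module (M : Type v) [AddCommGroup M] [Module R M] : Prop :=
  ∀ A B : Submodule R M, IsSummand R A → IsSummand R B → A ⊓ B = ⊥ → IsSummand R (A ⊔ B)

/-- Quasi-continuous module: C1 and C3. -/
def IsQuasiContinuousModule (M : Type v) [AddCommGroup M] [Module R M] : Prop :=
  IsC1Module R M ∧ IsC3Module R M

/-- Continuous module: C1 and C2. -/
def IsContinuousModule (M : Type v) [AddCommGroup M] [Module R M] : Prop :=
  IsC1Module R M ∧ IsC2Module R M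

/-- Quasi-injective module: every homomorphism from a submodule into the module
extends to an endomorphism. -/
def IsQuasiInjectiveModule (M : Type v) [AddCommGroup M] [Module R M] : Prop :=
  ∀ (N : Submodule R M) (f : N →ₗ[R] M), ∃ g : M →ₗ[R] M, ∀ x : N, g x = f x

end ModuleDefs

section ApproxDefs

variable (R : Type u) [Ring R]

/-- `g : M ⟶ E` is a `C`-preenvelope of `M`. -/
def IsPreenvelope (C : ModuleCat.{u} R → Prop) {M E : ModuleCat.{u} R} (g : M ⟶ E) : Prop :=
  C E ∧ ∀ E' : ModuleCat.{u} R, C E' → ∀ g' : M ⟶ E', ∃ α : E ⟶ E', g ≫ α = g'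

/-- A preenveloping class. -/
def Preenveloping (C : ModuleCat.{u} R → Prop) : Prop :=
  ∀ M : ModuleCat.{u} R, ∃ (E : ModuleCat.{u} R) (g : M ⟶ E), IsPreenvelope R C g

/-- `g : M ⟶ E` is a `C`-envelope of `M`. -/
def IsEnvelope (C : ModuleCat.{u} R → Prop) {M E : ModuleCat.{u} R} (g : M ⟶ E) : Prop :=
  IsPreenvelope R C g ∧ ∀ α : E ⟶ E, g ≫ α = g → IsIso α

/-- An enveloping class. -/
def Enveloping (C : ModuleCat.{u} R → Prop) : Prop :=
  ∀ M : ModuleCat.{u} R, ∃ (E : ModuleCat.{u} R) (g : M ⟶ E), IsEnvelope R C g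

/-- `g : X ⟶ M` is a `C`-precover of `M`. -/
def IsPrecover (C : ModuleCat.{u} R → Prop) {X M : ModuleCat.{u} R} (g : X ⟶ M) : Prop :=
  C X ∧ ∀ X' : ModuleCat.{u} R, C X' → ∀ g' : X' ⟶ M, ∃ α : X' ⟶ X, α ≫ g = g'

/-- A precovering class. -/
def Precovering (C : ModuleCat.{u} R → Prop) : Prop :=
  ∀ M : ModuleCat.{u} R, ∃ (X : ModuleCat.{u} R) (g : X ⟶ M), IsPrecover R C g

/-- `C` is closed under finite direct sums. -/
def ClosedUnderFiniteDirectSums (C : ModuleCat.{u} R → Prop) : Prop :=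
  ∀ (n : ℕ) (M : Fin n → ModuleCat.{u} R), (∀ i, C (M i)) →
    C (ModuleCat.of R (∀ i, M i))

/-- `C` is closed under isomorphisms. -/
def ClosedUnderIso (C : ModuleCat.{u} R → Prop) : Prop :=
  ∀ M N : ModuleCat.{u} R, (M ≅ N) → C M → C N

/-- `C` is closed under direct summands. -/
def ClosedUnderSummands (C : ModuleCat.{u} R → Prop) : Prop :=
  ∀ (M : ModuleCat.{u} R) (N : Submodule R M), IsSummand R N → C M → C (ModuleCat.of R N)

end ApproxDefs
section ExtraDefs

variable (R : Type u) [Ring R]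

/-- A uniform module: nonzero, and every nonzero submodule is essential. -/
def IsUniformModule (M : Type v) [AddCommGroup M] [Module R M] : Prop :=
  Nontrivial M ∧ ∀ N : Submodule R M, N ≠ ⊥ → IsEssentialIn R N (⊤ : Submodule R M)

/-- A module of composition length exactly `2`. -/
def HasCompositionLength2 (M : Type v) [AddCommGroup M] [Module R M] : Prop :=
  ∃ N : Submodule R M, IsSimpleModule R N ∧ IsSimpleModule R (M ⧸ N)

/-- A module of composition length at most `2`. -/
def CompositionLengthLE2 (M : Type v) [AddCommGroup M] [Module R M] : Prop :=
  ∃ N : Submodule R M, (IsSimpleModule R N ∨ N = ⊥) ∧ (IsSimpleModule R (M ⧸ N) ∨ N = ⊤)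

end ExtraDefs

section AuxAll
open DirectSum


section Aux
variable {R : Type u} [Ring R]

/-- A maximal submodule containing `J` and avoiding `a` exists. -/
lemma exists_maximal_avoiding {M : Type v} [AddCommGroup M] [Module R M]
    {J : Submodule R M} {a : M} (ha : a ∉ J) :
    ∃ P : Submodule R M, J ≤ P ∧ a ∉ P ∧ ∀ K : Submodule R M, a ∉ K → P ≤ K → K = P := by
  obtain ⟨P, hJP, hPs, hPmax⟩ := zorn_le_nonempty₀ {K : Submodule R M | a ∉ K}
    (fun c hcs hc y hy => ⟨sSup c, fun hmem => by
      obtain ⟨p, hpc, hap⟩ := (Submodule.mem_sSup_of_directed ⟨y, hy⟩ hc.directedOn).1 hmem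
      exact hcs hpc hap, fun z hz => le_sSup hz⟩) J ha
  exact ⟨P, hJP, hPs, fun K hK hPK => le_antisymm (hPmax hK hPK) hPK⟩

end Aux
section Aux2
variable {R : Type u} [Ring R]

/-- If every simple `R`-module (in universe u) is injective, then a submodule maximal with
respect to avoiding an element has simple quotient. -/
lemma simple_quotient_of_maximal_avoiding
    (hsimp : ∀ (M : Type u) [AddCommGroup M] [Module R M],
      IsSimpleModule R M → Module.Injective R M)
    {P : Submodule R R} {a : R} (haP : a ∉ P)
    (hmax : ∀ K : Submodule R R, a ∉ K → P ≤ K → K = P) :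
    IsSimpleModule R (R ⧸ P) := by
  set Q := R ⧸ P
  set abar : Q := Submodule.Quotient.mk a with habar
  have habar0 : abar ≠ 0 := fun h0 => haP ((Submodule.Quotient.mk_eq_zero P).1 h0)
  have key : ∀ p : Submodule R Q, p ≠ ⊥ → abar ∈ p := by
    intro p hp
    have hPle : P ≤ p.comap P.mkQ := Submodule.le_comap_mkQ P p
    have haK : a ∈ p.comap P.mkQ := by
      by_contra hcon
      have := hmax _ hcon hPle
      have hpbot : p = ⊥ := by
        have h1 : Submodule.map P.mkQ (p.comap P.mkQ) = p := by
          rw [Submodule.map_comap_eq, Submodule.range_mkQ, top_inf_eq]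
        rw [← h1, this, Submodule.mkQ_map_self]
      exact hp hpbot
    simpa using haK
  set S : Submodule R Q := Submodule.span R {abar} with hS
  have hSne : S ≠ ⊥ := by
    intro hbot
    have hmem : abar ∈ S := Submodule.subset_span rfl
    rw [hbot, Submodule.mem_bot] at hmem
    exact habar0 hmem
  have hSle : ∀ p : Submodule R Q, p ≠ ⊥ → S ≤ p := fun p hp =>
    Submodule.span_le.2 (Set.singleton_subset_iff.2 (key p hp))
  have hSsimple : IsSimpleModule R S := by
    rw [isSimpleModule_iff_isAtom]
    refine ⟨hSne, fun b hb => ?_⟩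
    by_contra hbne
    exact absurd (hSle b hbne) (not_le_of_gt hb)
  have hinj : Module.Injective R ↥S := hsimp _ hSsimple
  obtain ⟨π, hπ⟩ := hinj.out S.subtype S.injective_subtype LinearMap.id
  have hcompl : IsCompl S (LinearMap.ker π) := LinearMap.isCompl_of_proj hπ
  have hker : LinearMap.ker π = ⊥ := by
    by_contra hne
    have h1 : S ≤ LinearMap.ker π := hSle _ hne
    have h2 : S ≤ S ⊓ LinearMap.ker π := le_inf le_rfl h1
    rw [hcompl.inf_eq_bot] at h2
    exact hSne (le_bot_iff.1 h2)
  have hStop : S = ⊤ := by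
    have := hcompl.sup_eq_top
    rwa [hker, sup_bot_eq] at this
  rw [hStop] at hSsimple
  exact IsSimpleModule.congr Submodule.topEquiv.symm

/-- A direct sum of semisimple modules is semisimple. -/
lemma isSemisimple_directSum {ι : Type} [DecidableEq ι] {β : ι → Type u}
    [∀ i, AddCommGroup (β i)] [∀ i, Module R (β i)] [∀ i, IsSemisimpleModule R (β i)] :
    IsSemisimpleModule R (⨁ i, β i) := by
  refine isSemisimpleModule_of_isSemisimpleModule_submodule'
    (p := fun i => LinearMap.range (DirectSum.lof R ι β i)) (fun i => ?_) ?_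
  · have hinj : Function.Injective (DirectSum.lof R ι β i) := fun x y hxy => by
      have := congrArg (fun z : (Π₀ j, β j) => z i) hxy
      simpa only [DirectSum.lof_apply] using this
    exact IsSemisimpleModule.congr (LinearEquiv.ofInjective _ hinj).symm
  · rw [eq_top_iff]
    rintro x -
    induction x using DirectSum.induction_on with
    | zero => exact zero_mem _
    | of i b =>
      exact Submodule.mem_iSup_of_mem i ⟨b, by rw [DirectSum.lof_eq_of]⟩
    | add x y hx hy => exact add_mem hx hy

end Aux2
section Main
variable {R : Type u} [Ring R]

lemma noetherian_of_semisimple_injective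
    (hsimp : ∀ (M : Type u) [AddCommGroup M] [Module R M],
      IsSimpleModule R M → Module.Injective R M)
    (hss : ∀ (M : Type u) [AddCommGroup M] [Module R M],
      IsSemisimpleModule R M → Module.Injective R M) :
    IsNoetherianRing R := by
  rw [isNoetherianRing_iff, ← monotone_stabilizes_iff_noetherian]
  intro f
  by_contra hc
  push_neg at hc
  -- the union of the chain
  set I : Submodule R R := ⨆ n, f n with hI
  have hlt : ∀ n, ∃ a : R, a ∈ I ∧ a ∉ f n := by
    intro n
    obtain ⟨m, hnm, hne⟩ := hc n
    have hfnI : f n ≠ I := by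
      intro hEq
      refine hne (le_antisymm (f.monotone hnm) ?_)
      rw [hEq]
      exact le_iSup (fun k => f k) m
    obtain ⟨a, haI, hanf⟩ := SetLike.exists_of_lt (lt_of_le_of_ne (le_iSup (fun k => f k) n) hfnI)
    exact ⟨a, haI, hanf⟩
  choose a haI haf using hlt
  have hmaxex : ∀ n, ∃ P : Submodule R R, f n ≤ P ∧ a n ∉ P ∧
      ∀ K : Submodule R R, a n ∉ K → P ≤ K → K = P := fun n => exists_maximal_avoiding (haf n)
  choose P hfP haP hPmax using hmaxex
  have hQsimple : ∀ n, IsSimpleModule R (R ⧸ P n) :=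
    fun n => simple_quotient_of_maximal_avoiding hsimp (haP n) (hPmax n)
  haveI : ∀ n, IsSemisimpleModule R (R ⧸ P n) := fun n => by
    haveI := hQsimple n; infer_instance
  have hDss : IsSemisimpleModule R (⨁ n, R ⧸ P n) := isSemisimple_directSum
  have hDinj : Module.Injective R (⨁ n, R ⧸ P n) := hss _ hDss
  -- the canonical map from I to the direct sum
  have hfin : ∀ x : ↥I, ∃ k, (x : R) ∈ f k := fun x =>
    (Submodule.mem_iSup_of_chain f (x : R)).1 x.2
  let Φ : ↥I →ₗ[R] ⨁ n, R ⧸ P n :=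
    { toFun := fun x =>
        ⟨fun n => Submodule.mkQ (P n) (x : R),
          Trunc.mk ⟨(Finset.range (Classical.choose (hfin x) + 1)).val, fun n => by
            by_cases hn : n ∈ Finset.range (Classical.choose (hfin x) + 1)
            · exact Or.inl (by rwa [Finset.mem_val])
            · right
              rw [Finset.mem_range, not_lt] at hn
              have h1 : (x : R) ∈ f n :=
                f.monotone (le_trans (Nat.le_succ _) hn) (Classical.choose_spec (hfin x))
              exact (Submodule.Quotient.mk_eq_zero _).2 (hfP n h1)⟩⟩,
      map_add' := fun x y => DFinsupp.ext fun n => by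
        show Submodule.mkQ (P n) ((x : R) + (y : R)) = _
        rw [map_add]; rfl,
      map_smul' := fun c x => DFinsupp.ext fun n => by
        show Submodule.mkQ (P n) (c • (x : R)) = _
        rw [map_smul]; rfl }
  obtain ⟨Ψ, hΨ⟩ := hDinj.out I.subtype I.injective_subtype Φ
  set d : ⨁ n, R ⧸ P n := Ψ 1 with hd
  obtain ⟨⟨s, hs⟩, -⟩ := Trunc.exists_rep d.support'
  set N : ℕ := s.toFinset.sup id + 1 with hN
  have hdN : ∀ n, N ≤ n → d n = 0 := by
    intro n hn
    rcases hs n with hmem | h0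
    · exfalso
      have : n ≤ s.toFinset.sup id := Finset.le_sup (f := id) (Multiset.mem_toFinset.2 hmem)
      omega
    · exact h0
  have hkey : ∀ x : ↥I, ∀ n, N ≤ n → (x : R) ∈ P n := by
    intro x n hn
    have h1 : Ψ ((x : R)) = Φ x := hΨ x
    have h2 : Ψ ((x : R)) = (x : R) • d := by
      rw [hd, ← map_smul, smul_eq_mul, mul_one]
    have h3 : (Φ x) n = 0 := by
      rw [← h1, h2, DFinsupp.smul_apply, hdN n hn, smul_zero]
    have h4 : Submodule.mkQ (P n) (x : R) = 0 := h3
    rwa [Submodule.mkQ_apply, Submodule.Quotient.mk_eq_zero] at h4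
  exact haP N (hkey ⟨a N, haI N⟩ N le_rfl)

end Main

end AuxAll


section QI
variable {R : Type u} [Ring R]

lemma isQuasiInjective_of_isSemisimple (M : Type v) [AddCommGroup M] [Module R M]
    [IsSemisimpleModule R M] : IsQuasiInjectiveModule R M := by
  intro N f
  obtain ⟨Q, hQ⟩ := exists_isCompl N
  refine ⟨f ∘ₗ (N.projectionOnto Q hQ), fun x => ?_⟩
  simp [Submodule.projectionOnto_apply_left]

end QI

theorem stmt_1 (R : Type u) [Ring R]
    (h : ∀ (M : Type u) [AddCommGroup M] [Module R M],
      IsQuasiInjectiveModule R M → Module.Injective R M) :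
    IsNoetherianRing R ∧
      (∀ (M : Type u) [AddCommGroup M] [Module R M],
        IsSimpleModule R M → Module.Injective R M) ∧
      (∀ (M : Type u) [AddCommGroup M] [Module R M],
        IsSemisimpleModule R M → Module.Injective R M) := by
  have hss : ∀ (M : Type u) [AddCommGroup M] [Module R M],
      IsSemisimpleModule R M → Module.Injective R M := by
    intro M _ _ hM
    haveI := hM
    exact h M (isQuasiInjective_of_isSemisimple M)
  have hsimp : ∀ (M : Type u) [AddCommGroup M] [Module R M],
      IsSimpleModule R M → Module.Injective R M := by
    intro M _ _ hM
    haveI := hM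
    exact hss M inferInstance
  exact ⟨noetherian_of_semisimple_injective hsimp hss, hsimp, hss⟩
end

section
/- Let R be a ring such that every semisimple right R-module is injective. Then R is right noetherian. -/
universe u v

open CategoryTheory

section Aux

universe u'
variable {R : Type u'} [Ring R]

/-- If every semisimple `R`-module (in the same universe) is injective, then every proper
submodule is contained in a coatom. -/
lemma exists_coatom_above
    (h : ∀ (M : Type u') [AddCommGroup M] [Module R M],
      IsSemisimpleModule R M → Module.Injective R M)
    (M : Type u') [AddCommGroup M] [Module R M] (N : Submodule R M) (hN : N ≠ ⊤) :
    ∃ K : Submodule R M, N ≤ K ∧ IsCoatom K := by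
  obtain ⟨x, hx⟩ : ∃ x : M, x ∉ N := by
    by_contra h'; push_neg at h'; exact hN (eq_top_iff.2 fun y _ => h' y)
  obtain ⟨P, hNP, hPmax⟩ :=
    zorn_le_nonempty₀ {P : Submodule R M | N ≤ P ∧ x ∉ P}
      (fun c hcs hchain y hyc => by
        refine ⟨sSup c, ⟨le_trans (hcs hyc).1 (le_sSup hyc), ?_⟩, fun z hz => le_sSup hz⟩
        intro hxmem
        obtain ⟨p, hpc, hxp⟩ :=
          (Submodule.mem_sSup_of_directed ⟨y, hyc⟩ hchain.directedOn).1 hxmem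
        exact (hcs hpc).2 hxp)
      N ⟨le_refl N, hx⟩
  obtain ⟨hNP', hxP⟩ := hPmax.1
  set Q := M ⧸ P with hQ
  set xb : Q := P.mkQ x with hxb_def
  have hxb : xb ≠ 0 := fun hc => hxP ((Submodule.Quotient.mk_eq_zero P).1 hc)
  -- every nonzero submodule of Q contains xb
  have claim : ∀ W : Submodule R Q, W ≠ ⊥ → xb ∈ W := by
    intro W hW
    by_contra hxW
    have hPW : P ≤ W.comap P.mkQ := by
      intro p hp
      have h0 : P.mkQ p = 0 := by
        rw [Submodule.mkQ_apply, Submodule.Quotient.mk_eq_zero]; exact hp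
      rw [Submodule.mem_comap, h0]
      exact W.zero_mem
    have hmem : W.comap P.mkQ ∈ {P : Submodule R M | N ≤ P ∧ x ∉ P} :=
      ⟨le_trans hNP' hPW, hxW⟩
    have heq : W.comap P.mkQ = P := le_antisymm (hPmax.2 hmem hPW) hPW
    apply hW
    have hsurj : Function.Surjective P.mkQ := Submodule.mkQ_surjective P
    rw [← Submodule.map_comap_eq_of_surjective hsurj W, heq]
    rw [eq_bot_iff]
    rintro - ⟨p, hp, rfl⟩
    rw [Submodule.mem_bot, Submodule.mkQ_apply, Submodule.Quotient.mk_eq_zero]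
    exact hp
  -- the span of xb is simple
  set S0 : Submodule R Q := Submodule.span R {xb} with hS0
  have hxbS0 : xb ∈ S0 := Submodule.mem_span_singleton_self xb
  have hS0bot : S0 ≠ ⊥ := by
    intro hc
    exact hxb (by simpa [hc] using hxbS0)
  have hS0le : ∀ W : Submodule R Q, xb ∈ W → S0 ≤ W := fun W hw =>
    Submodule.span_le.2 (Set.singleton_subset_iff.2 hw)
  have hS0simple : IsSimpleModule R S0 := by
    rw [isSimpleModule_iff_isAtom]
    refine ⟨hS0bot, fun W hWlt => ?_⟩
    by_contra hWbot
    exact absurd (hS0le W (claim W hWbot)) (not_le_of_gt hWlt)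
  have hS0ss : IsSemisimpleModule R S0 := by
    refine (isSemisimpleModule_iff _ _).2 ⟨fun a => ?_⟩
    rcases hS0simple.eq_bot_or_eq_top a with rfl | rfl
    · exact ⟨⊤, isCompl_bot_top⟩
    · exact ⟨⊥, isCompl_top_bot⟩
  have hS0inj : Module.Injective R S0 := h S0 hS0ss
  obtain ⟨π, hπ⟩ := hS0inj.out S0.subtype (Submodule.injective_subtype S0) LinearMap.id
  -- ker π = ⊥
  have hker : LinearMap.ker π = ⊥ := by
    by_contra hkb
    have hxk : xb ∈ LinearMap.ker π := claim _ hkb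
    have : π xb = ⟨xb, hxbS0⟩ := hπ ⟨xb, hxbS0⟩
    rw [LinearMap.mem_ker, this] at hxk
    exact hxb (congrArg Subtype.val hxk)
  -- Q = S0
  have htop : ∀ y : Q, y ∈ S0 := by
    intro y
    have key : π (((π y : S0) : Q)) = π y := hπ (π y)
    have hz : π (y - ((π y : S0) : Q)) = 0 := by
      rw [map_sub, key, sub_self]
    have : y - ((π y : S0) : Q) = 0 := by
      have := hz
      rwa [← LinearMap.mem_ker, hker, Submodule.mem_bot] at this
    have hy : y = ((π y : S0) : Q) := by
      rwa [sub_eq_zero] at this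
    rw [hy]; exact (π y).2
  -- Q is simple
  have hQsimple : IsSimpleModule R Q := by
    have hnt : Nontrivial (Submodule R Q) := by
      refine ⟨⊥, ⊤, fun hc => hxb ?_⟩
      have : xb ∈ (⊥ : Submodule R Q) := hc ▸ Submodule.mem_top
      simpa using this
    refine (isSimpleModule_iff _ _).2 ⟨fun W => ?_⟩
    rcases eq_or_ne W ⊥ with hb | hb
    · exact Or.inl hb
    · refine Or.inr (eq_top_iff.2 fun y _ => ?_)
      exact hS0le W (claim W hb) (htop y)
  exact ⟨P, hNP, (isSimpleModule_iff_isCoatom).1 hQsimple⟩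

end Aux

set_option maxHeartbeats 1600000 in
theorem stmt_3 (R : Type u) [Ring R]
    (h : ∀ (M : Type u) [AddCommGroup M] [Module R M],
      IsSemisimpleModule R M → Module.Injective R M) :
    IsNoetherianRing R := by
  classical
  rw [isNoetherianRing_iff, ← monotone_stabilizes_iff_noetherian]
  intro f
  by_contra hf
  push_neg at hf
  set I : Ideal R := ⨆ n, f n with hI
  have hfI : ∀ n, f n < I := by
    intro n
    refine lt_of_le_of_ne (le_iSup (fun n => (f n : Ideal R)) n) fun hEq => ?_
    obtain ⟨m, hm1, hm2⟩ := hf n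
    exact hm2 (le_antisymm (f.mono hm1) (hEq ▸ le_iSup (fun n => (f n : Ideal R)) m))
  set J : ℕ → Submodule R I := fun n => (f n).comap I.subtype with hJ
  have hJtop : ∀ n, J n ≠ ⊤ := by
    intro n hc
    refine (hfI n).ne (le_antisymm (hfI n).le fun y hy => ?_)
    have : (⟨y, hy⟩ : I) ∈ J n := hc ▸ Submodule.mem_top
    simpa [hJ] using this
  choose K hJK hKco using fun n => exists_coatom_above h I (J n) (hJtop n)
  set S : ℕ → Type u := fun n => (I : Type u) ⧸ K n with hS
  have hSsimple : ∀ n, IsSimpleModule R (S n) :=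
    fun n => (isSimpleModule_iff_isCoatom).2 (hKco n)
  -- the submodule of eventually-zero sequences
  set D : Submodule R (∀ n, S n) :=
    { carrier := {v | ∃ N, ∀ n, N ≤ n → v n = 0}
      add_mem' := by
        rintro a b ⟨Na, hNa⟩ ⟨Nb, hNb⟩
        exact ⟨max Na Nb, fun n hn => by
          simp [hNa n (le_trans (le_max_left _ _) hn),
            hNb n (le_trans (le_max_right _ _) hn)]⟩
      zero_mem' := ⟨0, fun n _ => rfl⟩
      smul_mem' := by
        rintro c a ⟨Na, hNa⟩
        exact ⟨Na, fun n hn => by simp [hNa n hn]⟩ } with hD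
  -- D is semisimple
  let e : ∀ n, S n →ₗ[R] D := fun n =>
    LinearMap.codRestrict D (LinearMap.single R S n)
      (fun s => ⟨n + 1, fun m hm => Pi.single_eq_of_ne (by omega) s⟩)
  have he_apply : ∀ (n : ℕ) (s : S n), ((e n s : D) : ∀ m, S m) = Pi.single n s :=
    fun n s => rfl
  have he_inj : ∀ n, Function.Injective (e n) := by
    intro n a b hab
    have h1 : Pi.single n a n = Pi.single n b n := by
      have h2 := congrArg (fun z : D => (z : ∀ m, S m) n) hab
      simpa [he_apply] using h2
    simpa using h1
  have hDss : IsSemisimpleModule R D := by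
    refine isSemisimpleModule_of_isSemisimpleModule_submodule'
      (p := fun n => LinearMap.range (e n)) (fun n => ?_) ?_
    · have : IsSimpleModule R (LinearMap.range (e n)) :=
        have := hSsimple n
        IsSimpleModule.congr (LinearEquiv.ofInjective (e n) (he_inj n)).symm
      refine (isSemisimpleModule_iff _ _).2 ⟨fun a => ?_⟩
      rcases this.eq_bot_or_eq_top a with rfl | rfl
      · exact ⟨⊤, isCompl_bot_top⟩
      · exact ⟨⊥, isCompl_top_bot⟩
    · rw [eq_top_iff]
      rintro ⟨v, hv⟩ -
      obtain ⟨N, hN⟩ := hv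
      have hsum : (⟨v, ⟨N, hN⟩⟩ : D) = ∑ n ∈ Finset.range N, e n (v n) := by
        apply Subtype.ext
        have hcoe : ((∑ n ∈ Finset.range N, e n (v n) : D) : ∀ n, S n)
            = ∑ n ∈ Finset.range N, Pi.single n (v n) := by
          rw [AddSubmonoidClass.coe_finset_sum]
          exact Finset.sum_congr rfl fun i _ => he_apply i (v i)
        rw [hcoe]
        funext m
        show v m = (∑ n ∈ Finset.range N, Pi.single n (v n)) m
        rw [Finset.sum_apply]
        by_cases hm : m < N
        · rw [Finset.sum_eq_single m]
          · simp
          · intro b _ hbm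
            exact Pi.single_eq_of_ne (Ne.symm hbm) _
          · intro hmm
            exact absurd (Finset.mem_range.2 hm) hmm
        · rw [hN m (not_lt.1 hm)]
          exact (Finset.sum_eq_zero fun b hb =>
            Pi.single_eq_of_ne (by simp at hb; omega) _).symm
      rw [hsum]
      exact Submodule.sum_mem _ fun n _ =>
        Submodule.mem_iSup_of_mem n ⟨v n, rfl⟩
  have hDinj : Module.Injective R D := h D hDss
  -- the map I → D
  have hφmem : ∀ x : I, (fun n => (K n).mkQ x) ∈ D := by
    rintro ⟨x, hxI⟩
    have hdir : Directed (· ≤ ·) fun n => (f n : Ideal R) := f.monotone.directed_le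
    obtain ⟨m, hm⟩ := (Submodule.mem_iSup_of_directed _ hdir).1 (hI ▸ hxI)
    refine ⟨m, fun n hn => ?_⟩
    have hmem : (⟨x, hxI⟩ : I) ∈ K n := hJK n (by simpa [hJ] using f.mono hn hm)
    exact (Submodule.Quotient.mk_eq_zero _).2 hmem
  set φ : I →ₗ[R] D :=
    LinearMap.codRestrict D (LinearMap.pi fun n => (K n).mkQ) hφmem with hφ
  obtain ⟨g, hg⟩ := hDinj.out I.subtype (Submodule.injective_subtype I) φ
  obtain ⟨N0, hN0⟩ := (g 1).2
  -- K N0 = ⊤, contradiction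
  refine (hKco N0).1 (eq_top_iff.2 fun x _ => ?_)
  have h1 : g (x : R) = φ x := hg x
  have h2 : g ((x : R) * 1) = (x : R) • g 1 := by
    rw [← smul_eq_mul, map_smul]
  rw [mul_one, h1] at h2
  have h3 : ((φ x : D) : ∀ n, S n) N0 = (x : R) • (((g 1 : D) : ∀ n, S n) N0) := by
    rw [h2]
    rfl
  have h4 : (K N0).mkQ x = 0 := by
    have : ((φ x : D) : ∀ n, S n) N0 = (K N0).mkQ x := rfl
    rw [← this, h3, hN0 N0 le_rfl, smul_zero]
  exact (Submodule.Quotient.mk_eq_zero _).1 h4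
end

section
/- Let R be a ring and let C denote any one of the following classes of right R-modules: the class of all C2-modules, the class of all C3-modules, the class of all quasi-continuous modules, the class of all continuous modules, or the class of all quasi-injective modules. If N is a module belonging to C that is not injective, then the module M = N ⊕ E(N) does not have a C-preenvelope. -/
universe u v

open CategoryTheory

section Helpers
variable {R : Type u} [Ring R] {M : Type v} [AddCommGroup M] [Module R M]

lemma summand_of_split {S : Type v} [AddCommGroup S] [Module R S]
    (s : S →ₗ[R] M) (r : M →ₗ[R] S) (h : ∀ y, r (s y) = y) :
    IsSummand R (LinearMap.range s) := by
  refine ⟨LinearMap.ker (s ∘ₗ r), ?_, ?_⟩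
  · rw [Submodule.disjoint_def]
    rintro x ⟨y, rfl⟩ hx
    simp only [LinearMap.mem_ker, LinearMap.comp_apply, h] at hx
    exact hx
  · rw [codisjoint_iff, eq_top_iff]
    intro x _
    refine Submodule.mem_sup.2 ⟨s (r x), ⟨r x, rfl⟩, x - s (r x), ?_, by abel⟩
    simp [LinearMap.mem_ker, map_sub, h]

lemma quasiInjective_of_injective (h : Module.Injective R M) :
    IsQuasiInjectiveModule R M := by
  intro P f
  obtain ⟨g, hg⟩ := h.out P.subtype Subtype.val_injective f
  exact ⟨g, hg⟩

lemma isC2_of_quasiInjective (h : IsQuasiInjectiveModule R M) : IsC2Module R M := by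
  rintro A B ⟨B', hB⟩ ⟨e⟩
  obtain ⟨g, hg⟩ := h A (B.subtype ∘ₗ (e : A →ₗ[R] B))
  set r : M →ₗ[R] A :=
    (e.symm : B →ₗ[R] A) ∘ₗ (B.linearProjOfIsCompl B' hB) ∘ₗ g with hr
  have hfix : ∀ a : A, r (A.subtype a) = a := by
    intro a
    have h1 : g (A.subtype a) = (B.subtype (e a) : M) := hg a
    simp only [hr, LinearMap.comp_apply, h1]
    have h2 : B.linearProjOfIsCompl B' hB (B.subtype (e a)) = e a :=
      Submodule.linearProjOfIsCompl_apply_left hB (e a)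
    rw [h2]; simp
  have := summand_of_split A.subtype r hfix
  rwa [Submodule.range_subtype] at this

lemma isC3_of_isC2 (h : IsC2Module R M) : IsC3Module R M := by
  rintro A B ⟨A', hA⟩ hBsum hAB
  set q : M →ₗ[R] M := A'.subtype ∘ₗ (A'.projectionOnto A hA.symm) with hq
  have hqA : ∀ x ∈ A, q x = 0 := by
    intro x hx
    simp only [hq, LinearMap.comp_apply]
    rw [Submodule.projectionOnto_apply_of_mem_right hA.symm hx]
    simp
  have hqfix : ∀ x : M, x - q x ∈ A := by
    intro x
    have h2 := Submodule.projection_add_projection_eq_self hA x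
    have hx : x - q x = (A.projectionOnto A' hA x : M) := by
      simp only [hq, LinearMap.comp_apply, Submodule.subtype_apply]
      rw [sub_eq_iff_eq_add]
      exact h2.symm
    rw [hx]; exact (A.projectionOnto A' hA x).2
  have hinj : Function.Injective (q ∘ₗ B.subtype) := by
    rw [← LinearMap.ker_eq_bot, LinearMap.ker_eq_bot']
    intro b hb
    simp only [LinearMap.comp_apply, Submodule.subtype_apply] at hb
    have hbA : (b : M) ∈ A := by
      have := hqfix (b : M)
      rwa [hb, sub_zero] at this
    have : (b : M) ∈ A ⊓ B := ⟨hbA, b.2⟩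
    rw [hAB] at this
    exact Subtype.ext this
  set B' := LinearMap.range (q ∘ₗ B.subtype) with hB'
  have hB'sum : IsSummand R B' := by
    refine h B' B hBsum ⟨(LinearEquiv.ofInjective (q ∘ₗ B.subtype) hinj).symm⟩
  obtain ⟨Y, hY⟩ := hB'sum
  have hB'A' : B' ≤ A' := by
    rintro x ⟨b, rfl⟩
    simp only [LinearMap.comp_apply, hq, Submodule.subtype_apply]
    exact ((A'.projectionOnto A hA.symm) _).2
  have hsupeq : A ⊔ B = A ⊔ B' := by
    apply le_antisymm
    · refine sup_le le_sup_left ?_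
      intro b hb
      have : b = (b - q b) + q b := by abel
      rw [this]
      exact Submodule.add_mem _ (Submodule.mem_sup_left (hqfix b))
        (Submodule.mem_sup_right ⟨⟨b, hb⟩, rfl⟩)
    · refine sup_le le_sup_left ?_
      rintro x ⟨b, rfl⟩
      have : (q ∘ₗ B.subtype) b = (b : M) - ((b : M) - q (b : M)) := by
        simp only [LinearMap.comp_apply, Submodule.subtype_apply]; abel
      rw [this]
      exact Submodule.sub_mem _ (Submodule.mem_sup_right b.2)
        (Submodule.mem_sup_left (hqfix (b : M)))
  rw [hsupeq]
  refine ⟨A' ⊓ Y, ?_, ?_⟩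
  · rw [Submodule.disjoint_def]
    intro x hx hx2
    obtain ⟨a, ha, b', hb', rfl⟩ := Submodule.mem_sup.1 hx
    have haA' : a ∈ A' := by
      have : a = (a + b') - b' := by abel
      rw [this]
      exact Submodule.sub_mem _ hx2.1 (hB'A' hb')
    have ha0 : a = 0 := by
      have : a ∈ A ⊓ A' := ⟨ha, haA'⟩
      rwa [hA.inf_eq_bot, Submodule.mem_bot] at this
    subst ha0
    rw [zero_add] at hx2 ⊢
    have : b' ∈ B' ⊓ Y := ⟨hb', hx2.2⟩
    rwa [hY.inf_eq_bot, Submodule.mem_bot] at this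
  · rw [codisjoint_iff]
    have hA'eq : A' = B' ⊔ (Y ⊓ A') := by
      have := sup_inf_assoc_of_le (x := B') Y hB'A'
      rw [hY.sup_eq_top, top_inf_eq] at this
      exact this
    calc A ⊔ B' ⊔ (A' ⊓ Y) = A ⊔ (B' ⊔ (Y ⊓ A')) := by rw [inf_comm, sup_assoc]
    _ = A ⊔ A' := by rw [← hA'eq]
    _ = ⊤ := hA.sup_eq_top

end Helpers

section C1
variable {R : Type u} [Ring R] {M : Type v} [AddCommGroup M] [Module R M]

lemma essential_trans {S T U : Submodule R M} (h1 : IsEssentialIn R S T)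
    (h2 : IsEssentialIn R T U) : IsEssentialIn R S U := by
  refine ⟨h1.1.trans h2.1, fun K hK hKne => ?_⟩
  have hTK : T ⊓ K ≠ ⊥ := h2.2 K hK hKne
  have := h1.2 (T ⊓ K) inf_le_left hTK
  intro hSK
  apply this
  rw [eq_bot_iff] at hSK ⊢
  intro x hx
  exact hSK ⟨hx.1, hx.2.2⟩

lemma essential_map_inj {M' : Type v} [AddCommGroup M'] [Module R M']
    (f : M →ₗ[R] M') (hf : Function.Injective f) {S T : Submodule R M}
    (h : IsEssentialIn R S T) : IsEssentialIn R (S.map f) (T.map f) := by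
  refine ⟨Submodule.map_mono h.1, fun K hK hKne => ?_⟩
  set K' := Submodule.comap f K ⊓ T with hK'
  have hK'ne : K' ≠ ⊥ := by
    obtain ⟨y, hy, hy0⟩ := (Submodule.ne_bot_iff K).1 hKne
    obtain ⟨t, ht, rfl⟩ := hK hy
    refine (Submodule.ne_bot_iff K').2 ⟨t, ⟨⟨hy, ht⟩, fun h0 => hy0 (by rw [h0, map_zero])⟩⟩
  have := h.2 K' inf_le_right hK'ne
  obtain ⟨x, hx, hx0⟩ := (Submodule.ne_bot_iff _).1 this
  refine (Submodule.ne_bot_iff _).2 ⟨f x, ⟨⟨Submodule.mem_map_of_mem hx.1, hx.2.1⟩, ?_⟩⟩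
  intro h0
  exact hx0 (hf (by rw [h0, map_zero]))

lemma essential_self (S : Submodule R M) : IsEssentialIn R S S := by
  refine ⟨le_rfl, fun K hK hKne => ?_⟩
  rwa [inf_eq_right.2 hK]

lemma exists_maximal_essential (N0 : Submodule R M) :
    ∃ D, IsEssentialIn R N0 D ∧ ∀ F, IsEssentialIn R N0 F → D ≤ F → F = D := by
  obtain ⟨D, _, hmax⟩ := zorn_le_nonempty₀ {D | IsEssentialIn R N0 D}
    (fun c hc hchain y hy => by
      refine ⟨sSup c, ?_, fun z hz => le_sSup hz⟩
      have hdir : DirectedOn (· ≤ ·) c := hchain.directedOn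
      have hne : c.Nonempty := ⟨y, hy⟩
      refine ⟨(hc hy).1.trans (le_sSup hy), fun K hK hKne => ?_⟩
      obtain ⟨x, hx, hx0⟩ := (Submodule.ne_bot_iff K).1 hKne
      obtain ⟨p, hp, hxp⟩ := (Submodule.mem_sSup_of_directed hne hdir).1 (hK hx)
      have hsp : Submodule.span R {x} ≤ p := by
        rw [Submodule.span_le, Set.singleton_subset_iff]; exact hxp
      have hspne : Submodule.span R {x} ≠ ⊥ := by
        refine (Submodule.ne_bot_iff _).2 ⟨x, Submodule.mem_span_singleton_self x, hx0⟩
      have := (hc hp).2 (Submodule.span R {x}) hsp hspne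
      intro hbot
      apply this
      rw [eq_bot_iff] at hbot ⊢
      intro z hz
      refine hbot ⟨hz.1, ?_⟩
      have hsK : Submodule.span R {x} ≤ K := by
        rw [Submodule.span_le, Set.singleton_subset_iff]; exact hx
      exact hsK hz.2)
    N0 (essential_self N0)
  exact ⟨D, hmax.1, fun F hF hDF => le_antisymm (hmax.2 hF hDF) hDF⟩

lemma exists_maximal_disjoint (D : Submodule R M) :
    ∃ D', Disjoint D D' ∧ ∀ P, Disjoint D P → D' ≤ P → P = D' := by
  obtain ⟨D', _, hmax⟩ := zorn_le_nonempty₀ {P | Disjoint D P}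
    (fun c hc hchain y hy => by
      refine ⟨sSup c, ?_, fun z hz => le_sSup hz⟩
      have hdir : DirectedOn (· ≤ ·) c := hchain.directedOn
      have hne : c.Nonempty := ⟨y, hy⟩
      show Disjoint D (sSup c)
      rw [Submodule.disjoint_def]
      intro x hxD hxS
      obtain ⟨p, hp, hxp⟩ := (Submodule.mem_sSup_of_directed hne hdir).1 hxS
      exact Submodule.disjoint_def.1 (hc hp) x hxD hxp)
    ⊥ (disjoint_bot_right)
  exact ⟨D', hmax.1, fun P hP hD'P => le_antisymm (hmax.2 hP hD'P) hD'P⟩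

lemma isC1_of_injective (hE : Module.Injective R M) : IsC1Module R M := by
  intro N0
  obtain ⟨D, hDess, hDmax⟩ := exists_maximal_essential N0
  obtain ⟨D', hdisj, hD'max⟩ := exists_maximal_disjoint D
  have hjinj : Function.Injective ((D'.mkQ ∘ₗ D.subtype : D →ₗ[R] M ⧸ D')) := by
    rw [← LinearMap.ker_eq_bot, LinearMap.ker_eq_bot']
    intro d hd
    simp only [LinearMap.comp_apply, Submodule.subtype_apply,
      Submodule.mkQ_apply, Submodule.Quotient.mk_eq_zero] at hd
    have : (d : M) = 0 := Submodule.disjoint_def.1 hdisj (d : M) d.2 hd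
    exact Subtype.ext this
  have hessq : IsEssentialIn R (D.map D'.mkQ) (⊤ : Submodule R (M ⧸ D')) := by
    refine ⟨le_top, fun K _ hKne => ?_⟩
    obtain ⟨y, hy, hy0⟩ := (Submodule.ne_bot_iff K).1 hKne
    obtain ⟨x, rfl⟩ := D'.mkQ_surjective y
    have hxK₀ : x ∈ Submodule.comap D'.mkQ K := hy
    have hxD' : x ∉ D' := fun hxx => hy0 (by
      rwa [Submodule.mkQ_apply, Submodule.Quotient.mk_eq_zero])
    have hnotle : ¬ Submodule.comap D'.mkQ K ≤ D' := fun hle => hxD' (hle hxK₀)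
    have hnotdisj : ¬ Disjoint D (Submodule.comap D'.mkQ K) := by
      intro hd
      have hD'K₀ : D' ≤ Submodule.comap D'.mkQ K := by
        intro z hz
        show D'.mkQ z ∈ K
        have hz0 : D'.mkQ z = 0 := by
          rw [Submodule.mkQ_apply, Submodule.Quotient.mk_eq_zero]; exact hz
        rw [hz0]; exact K.zero_mem
      rw [hD'max _ hd hD'K₀] at hnotle
      exact hnotle le_rfl
    rw [Submodule.disjoint_def] at hnotdisj
    push_neg at hnotdisj
    obtain ⟨z, hzD, hzK₀, hz0⟩ := hnotdisj
    refine (Submodule.ne_bot_iff _).2 ⟨D'.mkQ z, ⟨⟨Submodule.mem_map_of_mem hzD, hzK₀⟩, ?_⟩⟩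
    intro h0
    rw [Submodule.mkQ_apply, Submodule.Quotient.mk_eq_zero] at h0
    exact hz0 (Submodule.disjoint_def.1 hdisj z hzD h0)
  obtain ⟨h, hh⟩ := hE.out (D'.mkQ ∘ₗ D.subtype) hjinj D.subtype
  have hh' : ∀ d : M, ∀ _ : d ∈ D, h (D'.mkQ d) = d := fun d hd => hh ⟨d, hd⟩
  have hkerh : ∀ y ∈ D.map D'.mkQ, h y = 0 → y = 0 := by
    rintro _ ⟨d, hd, rfl⟩ h0
    rw [hh' d hd] at h0
    rw [Submodule.mkQ_apply, Submodule.Quotient.mk_eq_zero, h0]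
    exact D'.zero_mem
  have hinjh : Function.Injective h := by
    rw [← LinearMap.ker_eq_bot]
    by_contra hker
    have := hessq.2 (LinearMap.ker h) le_top hker
    obtain ⟨y, hymem, hy0⟩ := (Submodule.ne_bot_iff _).1 this
    exact hy0 (hkerh y hymem.1 hymem.2)
  have hmapD : (D.map D'.mkQ).map h = D := by
    apply le_antisymm
    · rintro _ ⟨_, ⟨d, hd, rfl⟩, rfl⟩
      rw [hh' d hd]; exact hd
    · intro d hd
      exact ⟨D'.mkQ d, Submodule.mem_map_of_mem hd, hh' d hd⟩
  have hRD : LinearMap.range h = D := by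
    have hDess2 : IsEssentialIn R ((D.map D'.mkQ).map h)
        ((⊤ : Submodule R (M ⧸ D')).map h) := essential_map_inj h hinjh hessq
    rw [hmapD, Submodule.map_top] at hDess2
    have hNess : IsEssentialIn R N0 (LinearMap.range h) := essential_trans hDess hDess2
    have hDle : D ≤ LinearMap.range h := by
      rw [← hmapD]
      rintro _ ⟨y, _, rfl⟩
      exact ⟨y, rfl⟩
    exact hDmax _ hNess hDle
  have hrange : ∀ x : M, (h ∘ₗ D'.mkQ) x ∈ D := by
    intro x
    have : (h ∘ₗ D'.mkQ) x ∈ LinearMap.range h := ⟨D'.mkQ x, rfl⟩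
    rwa [hRD] at this
  have hfix : ∀ d : D, (LinearMap.codRestrict D (h ∘ₗ D'.mkQ) hrange) (D.subtype d) = d := by
    intro d
    apply Subtype.ext
    show (h ∘ₗ D'.mkQ) (d : M) = (d : M)
    exact hh' (d : M) d.2
  have hsum := summand_of_split D.subtype (LinearMap.codRestrict D (h ∘ₗ D'.mkQ) hrange) hfix
  rw [Submodule.range_subtype] at hsum
  exact ⟨D, hsum, hDess⟩

end C1

theorem stmt_4 (R : Type u) [Ring R] (C : ModuleCat.{u} R → Prop)
    (hC : C = (fun M : ModuleCat.{u} R => IsC2Module R M) ∨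
      C = (fun M : ModuleCat.{u} R => IsC3Module R M) ∨
      C = (fun M : ModuleCat.{u} R => IsQuasiContinuousModule R M) ∨
      C = (fun M : ModuleCat.{u} R => IsContinuousModule R M) ∨
      C = (fun M : ModuleCat.{u} R => IsQuasiInjectiveModule R M))
    (N E : ModuleCat.{u} R) (hN : C N) (hNinj : ¬ Module.Injective R N)
    (hEinj : Module.Injective R E) (i : N →ₗ[R] E) (hi : Function.Injective i)
    (hess : IsEssentialIn R (LinearMap.range i) (⊤ : Submodule R E)) :
    ¬ ∃ (X : ModuleCat.{u} R) (g : ModuleCat.of R (↑N × ↑E) ⟶ X),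
        IsPreenvelope R C g := by
  rintro ⟨X, g, hCX, hfac⟩
  -- X is a C3 module
  have hX3 : IsC3Module R ↑X := by
    rcases hC with h|h|h|h|h <;> subst h
    · exact isC3_of_isC2 hCX
    · exact hCX
    · exact hCX.2
    · exact isC3_of_isC2 hCX.2
    · exact isC3_of_isC2 (isC2_of_quasiInjective hCX)
  -- E belongs to C
  have hCE : C E := by
    have hqi : IsQuasiInjectiveModule R ↑E := quasiInjective_of_injective hEinj
    rcases hC with h|h|h|h|h <;> subst h
    · exact isC2_of_quasiInjective hqi
    · exact isC3_of_isC2 (isC2_of_quasiInjective hqi)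
    · exact ⟨isC1_of_injective hEinj, isC3_of_isC2 (isC2_of_quasiInjective hqi)⟩
    · exact ⟨isC1_of_injective hEinj, isC2_of_quasiInjective hqi⟩
    · exact hqi
  -- factor the two projections through g
  obtain ⟨α, hα⟩ := hfac N hN (ModuleCat.ofHom (LinearMap.fst R ↑N ↑E) : ModuleCat.of R (↑N × ↑E) ⟶ N)
  obtain ⟨β, hβ⟩ := hfac E hCE (ModuleCat.ofHom (LinearMap.snd R ↑N ↑E) : ModuleCat.of R (↑N × ↑E) ⟶ E)
  have hα' : ∀ p : ↑N × ↑E, α (g p) = p.1 := fun p => ConcreteCategory.congr_hom hα p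
  have hβ' : ∀ p : ↑N × ↑E, β (g p) = p.2 := fun p => ConcreteCategory.congr_hom hβ p
  -- three maps N → X, N → X, E → X
  set gl : (↑N × ↑E) →ₗ[R] ↑X := (g.hom : (↑N × ↑E) →ₗ[R] ↑X) with hgl
  set φN : ↑N →ₗ[R] ↑X := gl ∘ₗ LinearMap.inl R ↑N ↑E with hφN
  set δ : ↑N →ₗ[R] ↑X := gl ∘ₗ LinearMap.prod LinearMap.id i with hδ
  set σ : ↑E →ₗ[R] ↑X := gl ∘ₗ LinearMap.inr R ↑N ↑E with hσ
  have hαφN : ∀ n, (α.hom : ↑X →ₗ[R] ↑N) (φN n) = n := fun n => hα' (n, 0)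
  have hαδ : ∀ n, (α.hom : ↑X →ₗ[R] ↑N) (δ n) = n := fun n => hα' (n, i n)
  have hασ : ∀ e, (α.hom : ↑X →ₗ[R] ↑N) (σ e) = 0 := fun e => hα' (0, e)
  have hβφN : ∀ n, (β.hom : ↑X →ₗ[R] ↑E) (φN n) = 0 := fun n => hβ' (n, 0)
  have hβδ : ∀ n, (β.hom : ↑X →ₗ[R] ↑E) (δ n) = i n := fun n => hβ' (n, i n)
  have hβσ : ∀ e, (β.hom : ↑X →ₗ[R] ↑E) (σ e) = e := fun e => hβ' (0, e)
  -- A and Δ are summands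
  have hAsum : IsSummand R (LinearMap.range φN) :=
    summand_of_split φN (α.hom : ↑X →ₗ[R] ↑N) hαφN
  have hΔsum : IsSummand R (LinearMap.range δ) :=
    summand_of_split δ (α.hom : ↑X →ₗ[R] ↑N) hαδ
  have hΔA : LinearMap.range δ ⊓ LinearMap.range φN = ⊥ := by
    rw [eq_bot_iff]
    rintro x ⟨⟨n, rfl⟩, ⟨m, hm⟩⟩
    have h1 : m = n := by
      have := congrArg (α.hom : ↑X →ₗ[R] ↑N) hm
      rwa [hαφN, hαδ] at this
    subst h1
    have h2 : (0 : ↑E) = i m := by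
      have := congrArg (β.hom : ↑X →ₗ[R] ↑E) hm
      rwa [hβφN, hβδ] at this
    have h3 : m = 0 := hi (by rw [← h2, map_zero])
    subst h3
    rw [map_zero]
    exact Submodule.zero_mem ⊥
  obtain ⟨W, hW⟩ := hX3 _ _ hΔsum hAsum hΔA
  -- δ n = φN n + σ (i n)
  have hkey : ∀ n, δ n = φN n + σ (i n) := by
    intro n
    simp only [hδ, hφN, hσ, LinearMap.comp_apply, LinearMap.prod_apply, LinearMap.inl_apply,
      LinearMap.inr_apply, LinearMap.id_coe, id_eq, Pi.prod, ← map_add]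
    congr 1
    simp
  set B₀ : Submodule R ↑X := (LinearMap.range i).map σ with hB₀
  have hB₀A : B₀ ⊓ LinearMap.range φN = ⊥ := by
    rw [eq_bot_iff]
    rintro x ⟨⟨e, ⟨n, rfl⟩, rfl⟩, ⟨m, hm⟩⟩
    have h1 : m = 0 := by
      have := congrArg (α.hom : ↑X →ₗ[R] ↑N) hm
      rwa [hαφN, hασ] at this
    rw [← hm, h1, map_zero]
    exact Submodule.zero_mem ⊥
  have hB₀S : B₀ ≤ LinearMap.range δ ⊔ LinearMap.range φN := by
    rintro _ ⟨e, ⟨n, rfl⟩, rfl⟩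
    have : σ (i n) = δ n - φN n := by rw [hkey n]; abel
    rw [this]
    exact Submodule.sub_mem _ (Submodule.mem_sup_left ⟨n, rfl⟩)
      (Submodule.mem_sup_right ⟨n, rfl⟩)
  have hSB₀ : LinearMap.range δ ⊔ LinearMap.range φN ≤ B₀ ⊔ LinearMap.range φN := by
    refine sup_le ?_ le_sup_right
    rintro _ ⟨n, rfl⟩
    rw [hkey n]
    exact Submodule.add_mem _ (Submodule.mem_sup_right ⟨n, rfl⟩)
      (Submodule.mem_sup_left ⟨i n, ⟨n, rfl⟩, rfl⟩)
  -- B₀ and C' := range φN ⊔ W are complementary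
  have hdisj2 : Disjoint B₀ (LinearMap.range φN ⊔ W) := by
    rw [Submodule.disjoint_def]
    intro x hx hx2
    obtain ⟨a, ha, w, hw, rfl⟩ := Submodule.mem_sup.1 hx2
    have hwS : w ∈ LinearMap.range δ ⊔ LinearMap.range φN := by
      have hxS : a + w ∈ LinearMap.range δ ⊔ LinearMap.range φN := hB₀S hx
      have : w = (a + w) - a := by abel
      rw [this]
      exact Submodule.sub_mem _ hxS (Submodule.mem_sup_right ha)
    have hw0 : w = 0 := by
      have : w ∈ (LinearMap.range δ ⊔ LinearMap.range φN) ⊓ W := ⟨hwS, hw⟩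
      rwa [hW.inf_eq_bot, Submodule.mem_bot] at this
    subst hw0
    rw [add_zero] at hx ⊢
    have : a ∈ B₀ ⊓ LinearMap.range φN := ⟨hx, ha⟩
    rwa [hB₀A, Submodule.mem_bot] at this
  have hsup2 : B₀ ⊔ (LinearMap.range φN ⊔ W) = ⊤ := by
    rw [eq_top_iff, ← hW.sup_eq_top]
    refine sup_le ?_ ?_
    · rw [← sup_assoc]
      exact le_trans hSB₀ le_sup_left
    · exact le_trans le_sup_right le_sup_right
  -- modular law: B = B₀ ⊔ (C' ⊓ B)
  have hB₀B : B₀ ≤ LinearMap.range σ := by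
    rintro _ ⟨e, _, rfl⟩; exact ⟨e, rfl⟩
  have hmod : B₀ ⊔ ((LinearMap.range φN ⊔ W) ⊓ LinearMap.range σ) = LinearMap.range σ := by
    have := sup_inf_assoc_of_le (x := B₀) (LinearMap.range φN ⊔ W) hB₀B
    rw [hsup2, top_inf_eq] at this
    exact this.symm
  -- the leftover piece is zero by essentiality
  have hCB : (LinearMap.range φN ⊔ W) ⊓ LinearMap.range σ = ⊥ := by
    by_contra hne
    have hσinj : Function.Injective σ := by
      intro a b hab
      have := congrArg (β.hom : ↑X →ₗ[R] ↑E) hab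
      rwa [hβσ, hβσ] at this
    set K' := Submodule.comap σ ((LinearMap.range φN ⊔ W) ⊓ LinearMap.range σ) with hK'
    have hK'ne : K' ≠ ⊥ := by
      obtain ⟨x, hx, hx0⟩ := (Submodule.ne_bot_iff _).1 hne
      obtain ⟨e, rfl⟩ := hx.2
      refine (Submodule.ne_bot_iff _).2 ⟨e, hx, fun h0 => hx0 (by rw [h0, map_zero])⟩
    have := hess.2 K' le_top hK'ne
    obtain ⟨e₀, he₀, he₀0⟩ := (Submodule.ne_bot_iff _).1 this
    have hmem : σ e₀ ∈ B₀ ⊓ (LinearMap.range φN ⊔ W) :=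
      ⟨⟨e₀, he₀.1, rfl⟩, he₀.2.1⟩
    rw [hdisj2.eq_bot, Submodule.mem_bot] at hmem
    exact he₀0 (hσinj (by rw [hmem, map_zero]))
  have hBB₀ : LinearMap.range σ = B₀ := by
    rw [← hmod, hCB, sup_bot_eq]
  -- range i = ⊤
  have hitop : LinearMap.range i = ⊤ := by
    rw [eq_top_iff]
    intro e _
    have : σ e ∈ B₀ := by rw [← hBB₀]; exact ⟨e, rfl⟩
    obtain ⟨e', he', heq⟩ := this
    have : e' = e := by
      have := congrArg (β.hom : ↑X →ₗ[R] ↑E) heq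
      rwa [hβσ, hβσ] at this
    rwa [← this]
  -- i is an isomorphism, so N is injective
  have hsurj : Function.Surjective i := LinearMap.range_eq_top.1 hitop
  set e : ↑N ≃ₗ[R] ↑E := LinearEquiv.ofBijective i ⟨hi, hsurj⟩ with he
  apply hNinj
  constructor
  intro P Q _ _ _ _ f hf gg
  obtain ⟨h, hh⟩ := hEinj.out f hf ((e : ↑N →ₗ[R] ↑E) ∘ₗ gg)
  refine ⟨(e.symm : ↑E →ₗ[R] ↑N) ∘ₗ h, fun x => ?_⟩
  simp only [LinearMap.comp_apply, hh x]
  simp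
end

section
/- Let R be a ring and C a class of right R-modules closed under isomorphisms and direct summands. If C is a preenveloping class, then C is closed under arbitrary direct products. -/
universe u v

open CategoryTheory

theorem stmt_5 (R : Type u) [Ring R] (C : ModuleCat.{u} R → Prop)
    (hiso : ClosedUnderIso R C) (hsmd : ClosedUnderSummands R C)
    (henv : Preenveloping R C) :
    ∀ (ι : Type u) (M : ι → ModuleCat.{u} R), (∀ i, C (M i)) →
      C (ModuleCat.of R (∀ i, M i)) := by
  intro ι M hM
  set P : ModuleCat.{u} R := ModuleCat.of R (∀ i, M i) with hP
  obtain ⟨E, g, hCE, hlift⟩ := henv P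
  have hproj : ∀ i : ι, ∃ a : E ⟶ M i, g ≫ a = ModuleCat.ofHom (LinearMap.proj i) :=
    fun i => hlift (M i) (hM i) (ModuleCat.ofHom (LinearMap.proj i))
  choose a ha using hproj
  let α : E →ₗ[R] (∀ i, M i) := LinearMap.pi (fun i => (a i).hom)
  have hαg : ∀ x : P, α (g x) = x := by
    intro x
    funext i
    have := congrArg (fun (h : P ⟶ M i) => h x) (ha i)
    simp at this
    exact this
  have hinj : Function.Injective g := by
    intro x y hxy
    have := hαg x
    rw [hxy, hαg y] at this
    exact this.symm
  let e : P ≃ₗ[R] LinearMap.range g.hom := LinearEquiv.ofInjective _ hinj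
  let f : E →ₗ[R] LinearMap.range g.hom := e.toLinearMap ∘ₗ α
  have hf : ∀ x : LinearMap.range g.hom, f x = x := by
    rintro ⟨_, m, rfl⟩
    apply Subtype.ext
    show ((e (α (g m)) : LinearMap.range g.hom) : E) = g m
    rw [hαg m]
    rfl
  have hcompl : IsCompl (LinearMap.range g.hom) (LinearMap.ker f) :=
    LinearMap.isCompl_of_proj hf
  have hsum : IsSummand R (LinearMap.range g.hom) := ⟨_, hcompl⟩
  have hCrange := hsmd E _ hsum hCE
  exact hiso _ _ (e.symm.toModuleIso) hCrange
end

section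
/- A ring R is right noetherian if and only if every direct sum of any family of injective right R-modules is a C3-module. -/
universe u v

open CategoryTheory

noncomputable section AuxC3
open CategoryTheory DirectSum

variable {R : Type u} [Ring R]

lemma injective_of_retract {M N : Type v} [AddCommGroup M] [Module R M] [AddCommGroup N]
    [Module R N] (i : N →ₗ[R] M) (r : M →ₗ[R] N) (hri : ∀ n, r (i n) = n)
    (hM : Module.Injective R M) : Module.Injective R N :=
  ⟨fun X Y _ _ _ _ f hf g => by
    obtain ⟨h, hh⟩ := hM.out f hf (i ∘ₗ g)
    exact ⟨r ∘ₗ h, fun x => by simp [hh x, hri]⟩⟩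

lemma injective_of_equiv {M N : Type v} [AddCommGroup M] [Module R M] [AddCommGroup N]
    [Module R N] (e : M ≃ₗ[R] N) (hM : Module.Injective R M) : Module.Injective R N :=
  injective_of_retract e.symm.toLinearMap e.toLinearMap (fun n => e.apply_symm_apply n) hM

lemma injective_pi {κ : Type v} (β : κ → Type v) [∀ k, AddCommGroup (β k)]
    [∀ k, Module R (β k)] (h : ∀ k, Module.Injective R (β k)) :
    Module.Injective R (∀ k, β k) :=
  ⟨fun X Y _ _ _ _ f hf g => by
    choose h' hh' using fun k => (h k).out f hf ((LinearMap.proj k) ∘ₗ g)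
    exact ⟨LinearMap.pi h', fun x => funext fun k => hh' k x⟩⟩

lemma injective_prod {M N : Type v} [AddCommGroup M] [Module R M] [AddCommGroup N]
    [Module R N] (hM : Module.Injective R M) (hN : Module.Injective R N) :
    Module.Injective R (M × N) :=
  ⟨fun X Y _ _ _ _ f hf g => by
    obtain ⟨h1, hh1⟩ := hM.out f hf ((LinearMap.fst R M N) ∘ₗ g)
    obtain ⟨h2, hh2⟩ := hN.out f hf ((LinearMap.snd R M N) ∘ₗ g)
    exact ⟨h1.prod h2, fun x => Prod.ext (hh1 x) (hh2 x)⟩⟩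

lemma isSummand_of_injective' {M : Type v} [AddCommGroup M] [Module R M]
    (N : Submodule R M) (h : Module.Injective R N) :
    ∃ N' : Submodule R M, IsCompl N N' := by
  obtain ⟨r, hr⟩ := h.out N.subtype Subtype.val_injective LinearMap.id
  set π : M →ₗ[R] M := N.subtype ∘ₗ r with hπ
  have hπN : ∀ x ∈ N, π x = x := fun x hx => by
    simpa [hπ] using congrArg (Subtype.val) (hr ⟨x, hx⟩)
  have hπmem : ∀ x, π x ∈ N := fun x => (r x).2
  refine ⟨LinearMap.ker π, ?_, ?_⟩
  · rw [disjoint_iff]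
    refine le_bot_iff.mp fun x hx => ?_
    have h1 : π x = x := hπN x hx.1
    have h2 : π x = 0 := hx.2
    simpa [h1] using h2.symm ▸ h1.symm
  · rw [codisjoint_iff, eq_top_iff]
    intro x _
    have : x = π x + (x - π x) := by abel
    refine Submodule.mem_sup.mpr ⟨π x, hπmem x, x - π x, ?_, by abel⟩
    simp only [LinearMap.mem_ker, map_sub]
    rw [hπN (π x) (hπmem x), sub_self]

lemma injective_of_isSummand {M : Type v} [AddCommGroup M] [Module R M]
    (hM : Module.Injective R M) {N N' : Submodule R M} (hc : IsCompl N N') :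
    Module.Injective R N :=
  injective_of_retract N.subtype (N.linearProjOfIsCompl N' hc)
    (fun n => Submodule.linearProjOfIsCompl_apply_left hc n) hM

lemma key_lemma {X : Type v} [AddCommGroup X] [Module R X] (hC3 : IsC3Module R X)
    (A Q : Submodule R X) (hAQ : IsCompl A Q) (hQ : Module.Injective R Q)
    (φ : A →ₗ[R] Q) (hφ : Function.Injective φ) : Module.Injective R A := by
  classical
  set φ' : A →ₗ[R] X := Q.subtype ∘ₗ φ with hφ'def
  have hφ'inj : Function.Injective φ' := Subtype.val_injective.comp hφ
  set b : A →ₗ[R] X := A.subtype + φ' with hbdef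
  set B := LinearMap.range b with hBdef
  set Φ := LinearMap.range φ' with hΦdef
  have hΦQ : Φ ≤ Q := by rintro x ⟨a, rfl⟩; exact (φ a).2
  have hdisjAQ : A ⊓ Q = ⊥ := hAQ.disjoint.eq_bot
  have hφ'memQ : ∀ a : A, φ' a ∈ Q := fun a => (φ a).2
  have hAQtop : A ⊔ Q = ⊤ := codisjoint_iff.mp hAQ.codisjoint
  have hbapply : ∀ a : A, b a = (a : X) + φ' a := fun a => rfl
  -- B is a summand with complement Q
  have hcomplBQ : IsCompl B Q := by
    constructor
    · rw [disjoint_iff, eq_bot_iff]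
      rintro x ⟨⟨a, rfl⟩, hxQ⟩
      have haQ : (a : X) ∈ Q := by
        have h1 : (a : X) = b a - φ' a := by rw [hbapply]; abel
        rw [h1]; exact Submodule.sub_mem Q hxQ (hφ'memQ a)
      have h2 : (a : X) ∈ A ⊓ Q := ⟨a.2, haQ⟩
      rw [hdisjAQ] at h2
      have ha0 : a = 0 := Subtype.val_injective h2
      simp [ha0]
    · rw [codisjoint_iff, eq_top_iff]
      intro x _
      obtain ⟨u, hu, v, hv, hx⟩ := Submodule.mem_sup.mp
        (show x ∈ A ⊔ Q by rw [hAQtop]; trivial)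
      refine Submodule.mem_sup.mpr ⟨b ⟨u, hu⟩, ⟨_, rfl⟩, v - φ' ⟨u, hu⟩,
        Submodule.sub_mem Q hv (hφ'memQ _), ?_⟩
      rw [hbapply]; rw [← hx]; abel
  have hABbot : A ⊓ B = ⊥ := by
    rw [eq_bot_iff]
    rintro x ⟨hxA, ⟨a, rfl⟩⟩
    have h1 : b a - (a : X) ∈ A := Submodule.sub_mem A hxA a.2
    have h2 : b a - (a : X) = φ' a := by rw [hbapply]; abel
    have h3 : φ' a ∈ A ⊓ Q := ⟨h2 ▸ h1, hφ'memQ a⟩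
    rw [hdisjAQ] at h3
    have ha0 : a = 0 := hφ'inj (by simpa using h3)
    simp [ha0]
  obtain ⟨C, hcompl⟩ := hC3 A B ⟨Q, hAQ⟩ ⟨Q, hcomplBQ⟩ hABbot
  have heq : A ⊔ B = A ⊔ Φ := by
    apply le_antisymm
    · refine sup_le le_sup_left ?_
      rintro x ⟨a, rfl⟩
      rw [hbapply]
      exact Submodule.add_mem _ (Submodule.mem_sup_left a.2)
        (Submodule.mem_sup_right ⟨a, rfl⟩)
    · refine sup_le le_sup_left ?_
      rintro x ⟨a, rfl⟩
      have : φ' a = b a - (a : X) := by rw [hbapply]; abel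
      rw [this]
      exact Submodule.sub_mem _ (Submodule.mem_sup_right ⟨a, rfl⟩)
        (Submodule.mem_sup_left a.2)
  rw [heq] at hcompl
  have hcomplΦ : IsCompl Φ (A ⊔ C) := by
    constructor
    · rw [disjoint_iff, eq_bot_iff]
      rintro x ⟨hxΦ, hxAC⟩
      obtain ⟨u, hu, v, hv, hx⟩ := Submodule.mem_sup.mp hxAC
      have hvmem : v ∈ (A ⊔ Φ) ⊓ C := by
        refine ⟨?_, hv⟩
        have : v = x - u := by rw [← hx]; abel
        rw [this]
        exact Submodule.sub_mem _ (Submodule.mem_sup_right hxΦ) (Submodule.mem_sup_left hu)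
      rw [hcompl.disjoint.eq_bot] at hvmem
      have hv0 : v = 0 := hvmem
      have hxu : x = u := by rw [← hx, hv0, add_zero]
      have : x ∈ A ⊓ Q := ⟨hxu ▸ hu, hΦQ hxΦ⟩
      rw [hdisjAQ] at this
      exact this
    · have htop : (A ⊔ Φ) ⊔ C = ⊤ := codisjoint_iff.mp hcompl.codisjoint
      rw [codisjoint_iff, ← sup_assoc, sup_comm Φ A, htop]
  have hΦinj : Module.Injective R Φ :=
    injective_of_retract (Submodule.inclusion hΦQ)
      ((Φ.linearProjOfIsCompl (A ⊔ C) hcomplΦ) ∘ₗ Q.subtype)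
      (fun n => by
        have : (Q.subtype) (Submodule.inclusion hΦQ n) = (n : X) := rfl
        simp only [LinearMap.comp_apply, this]
        exact Submodule.linearProjOfIsCompl_apply_left hcomplΦ n) hQ
  exact injective_of_equiv (LinearEquiv.ofInjective φ' hφ'inj).symm hΦinj

lemma isC3_of_injective {M : Type v} [AddCommGroup M] [Module R M]
    (hM : Module.Injective R M) : IsC3Module R M := by
  rintro A B ⟨A', hA⟩ ⟨B', hB⟩ hAB
  have hAinj : Module.Injective R A := injective_of_isSummand hM hA
  have hBinj : Module.Injective R B := injective_of_isSummand hM hB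
  set c : A × B →ₗ[R] M := A.subtype.coprod B.subtype with hcdef
  have hcinj : Function.Injective c := by
    rw [← LinearMap.ker_eq_bot, eq_bot_iff]
    rintro ⟨a, b⟩ hab
    have h1 : (a : M) + b = 0 := hab
    have h2 : (a : M) ∈ A ⊓ B := ⟨a.2, by
      have hb : (a : M) = -b := by
        rw [eq_neg_iff_add_eq_zero]; exact h1
      rw [hb]; exact Submodule.neg_mem B b.2⟩
    rw [hAB] at h2
    have ha0 : a = 0 := Subtype.val_injective h2
    have hb0 : b = 0 := Subtype.val_injective (by
      have : (b : M) = 0 := by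
        have := h1; rw [ha0] at this; simpa using this
      simpa using this)
    simp [ha0, hb0]
  have hrange : LinearMap.range c = A ⊔ B := by
    rw [hcdef, LinearMap.range_coprod, Submodule.range_subtype, Submodule.range_subtype]
  have e : (A × B) ≃ₗ[R] (A ⊔ B : Submodule R M) :=
    (LinearEquiv.ofInjective c hcinj).trans (LinearEquiv.ofEq _ _ hrange)
  exact isSummand_of_injective' _ (injective_of_equiv e (injective_prod hAinj hBinj))

lemma directSum_injective_of_noetherian (hR : IsNoetherianRing R) {ι : Type u}
    (β : ι → Type u) [∀ i, AddCommGroup (β i)] [∀ i, Module R (β i)]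
    (hβ : ∀ i, Module.Injective R (β i)) : Module.Injective R (⨁ i, β i) := by
  classical
  apply Module.Baer.injective
  intro I g
  haveI : IsNoetherian R R := hR
  obtain ⟨s, hs⟩ := (IsNoetherian.noetherian I : I.FG)
  -- the finite support set
  set S : Finset ι := s.attach.biUnion
    (fun x => DFinsupp.support (g ⟨x.1, hs ▸ Submodule.subset_span x.2⟩)) with hSdef
  -- the submodule of elements supported in S
  set P : Submodule R (⨁ i, β i) :=
    ⨅ j ∈ ((↑S : Set ι)ᶜ), LinearMap.ker (DirectSum.component R ι β j) with hPdef
  have hmemP : ∀ v : ⨁ i, β i, v ∈ P ↔ ∀ j ∉ S, v j = 0 := by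
    intro v
    simp only [hPdef, Submodule.mem_iInf, LinearMap.mem_ker, Set.mem_compl_iff,
      Finset.mem_coe]
    exact Iff.rfl
  have hrange : ∀ x : ↥I, g x ∈ P := by
    have hmap : Submodule.map I.subtype (P.comap g) = I := by
      apply le_antisymm
      · rintro y ⟨x, _, rfl⟩; exact x.2
      · conv_lhs => rw [← hs]
        rw [Submodule.span_le]
        intro y hy
        have hyI : y ∈ I := hs ▸ Submodule.subset_span hy
        refine ⟨⟨y, hyI⟩, ?_, rfl⟩
        show g ⟨y, hyI⟩ ∈ P
        rw [hmemP]
        intro j hj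
        have hns : j ∉ DFinsupp.support (g ⟨y, hyI⟩) := by
          intro hmem
          exact hj (Finset.mem_biUnion.mpr ⟨⟨y, hy⟩, Finset.mem_attach _ _, hmem⟩)
        exact DFinsupp.notMem_support_iff.mp hns
    intro x
    have : (⊤ : Submodule R ↥I) ≤ P.comap g := by
      rw [← Submodule.map_le_map_iff_of_injective (Submodule.injective_subtype I),
        Submodule.map_subtype_top, hmap]
    exact this trivial
  -- P is isomorphic to the finite product over S
  set toPi : ↥P →ₗ[R] (∀ j : (↑S : Set ι), β j.1) :=
    LinearMap.pi (fun j => (DirectSum.component R ι β j.1) ∘ₗ P.subtype) with htoPi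
  have hLmem : ∀ u : ∀ j : (↑S : Set ι), β j.1, DirectSum.mk β S u ∈ P := by
    intro u
    rw [hmemP]
    intro j hj
    exact DirectSum.mk_apply_of_notMem hj
  set L : (∀ j : (↑S : Set ι), β j.1) →ₗ[R] ↥P :=
    { toFun := fun u => ⟨DirectSum.mk β S u, hLmem u⟩
      map_add' := fun u v => Subtype.ext ((DirectSum.mk β S).map_add u v)
      map_smul' := fun r u => Subtype.ext (by
        rw [SetLike.val_smul]
        refine DFinsupp.ext fun j => ?_
        by_cases hj : j ∈ S
        · rw [DFinsupp.smul_apply, DirectSum.mk_apply_of_mem hj,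
            DirectSum.mk_apply_of_mem hj]
          rfl
        · rw [DFinsupp.smul_apply, DirectSum.mk_apply_of_notMem hj,
            DirectSum.mk_apply_of_notMem hj, smul_zero]) } with hLdef
  have hleft : ∀ v : ↥P, L (toPi v) = v := by
    intro v
    refine Subtype.ext (DFinsupp.ext fun j => ?_)
    by_cases hj : j ∈ S
    · rw [show ((L (toPi v) : ↥P) : ⨁ i, β i) = DirectSum.mk β S (toPi v) from rfl,
        DirectSum.mk_apply_of_mem hj]
      rfl
    · rw [show ((L (toPi v) : ↥P) : ⨁ i, β i) = DirectSum.mk β S (toPi v) from rfl,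
        DirectSum.mk_apply_of_notMem hj]
      exact ((hmemP _).mp v.2 j hj).symm
  have hright : ∀ u, toPi (L u) = u := by
    intro u
    funext j
    have : toPi (L u) j = (DirectSum.mk β S u) j.1 := rfl
    rw [this, DirectSum.mk_apply_of_mem j.2]
  set e : ↥P ≃ₗ[R] (∀ j : (↑S : Set ι), β j.1) :=
    { toPi with invFun := fun u => L u, left_inv := hleft, right_inv := hright } with hedef
  have hPinj : Module.Injective R ↥P :=
    injective_of_equiv e.symm (injective_pi _ (fun j => hβ j.1))
  obtain ⟨H, hH⟩ := hPinj.out I.subtype (Submodule.injective_subtype I)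
    (LinearMap.codRestrict P g hrange)
  refine ⟨P.subtype ∘ₗ H, fun x mem => ?_⟩
  have h1 := hH ⟨x, mem⟩
  have h2 : P.subtype (H (I.subtype ⟨x, mem⟩)) =
      P.subtype (LinearMap.codRestrict P g hrange ⟨x, mem⟩) := by rw [h1]
  simpa using h2

lemma exists_embedding_injective (M : Type u) [AddCommGroup M] [Module R M] :
    ∃ (J : Type u) (_ : AddCommGroup J) (_ : Module R J) (f : M →ₗ[R] J),
      Module.Injective R J ∧ Function.Injective f := by
  haveI : EnoughInjectives (ModuleCat.{u} R) := ModuleCat.enoughInjectives.{u, u} R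
  let MC : ModuleCat.{u} R := ModuleCat.of R M
  let J := Injective.under MC
  let f : MC ⟶ J := Injective.ι MC
  refine ⟨J, inferInstance, inferInstance, f.hom, ?_, ?_⟩
  · exact @Module.injective_module_of_injective_object R J _ _ _ (Injective.injective_under MC)
  · exact (ModuleCat.mono_iff_injective f).mp inferInstance

lemma abs_step {ι : Type u} (F : Option ι → ModuleCat.{u} R)
    (hC3 : IsC3Module R (⨁ o, (F o : Type u)))
    (hJ : Module.Injective R (F none))
    (f : (⨁ i, (F (some i) : Type u)) →ₗ[R] (F none : Type u))
    (hf : Function.Injective f) :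
    Module.Injective R (⨁ i, (F (some i) : Type u)) := by
  classical
  set γ : Option ι → Type u := fun o => (F o : Type u) with hγ
  set M := ⨁ i, γ (some i) with hM
  set X := ⨁ o, γ o with hX
  set g : M →ₗ[R] X := DirectSum.toModule R ι X
    (fun i => DirectSum.lof R (Option ι) γ (some i)) with hg
  set g' : X →ₗ[R] M := DirectSum.toModule R (Option ι) M
      (fun o => Option.rec (0 : γ none →ₗ[R] M)
        (fun i => DirectSum.lof R ι (fun i => γ (some i)) i) o) with hg'
  have h1 : ∀ (i : ι) (x : γ (some i)),
      g (DirectSum.lof R ι (fun i => γ (some i)) i x)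
        = DirectSum.lof R (Option ι) γ (some i) x := by
    intro i x
    rw [hg, DirectSum.toModule_lof]
  have h2 : ∀ (i : ι) (x : γ (some i)),
      g' (DirectSum.lof R (Option ι) γ (some i) x)
        = DirectSum.lof R ι (fun i => γ (some i)) i x := by
    intro i x
    rw [hg', DirectSum.toModule_lof]
  have hg'g : ∀ m : M, g' (g m) = m := by
    intro m
    have hcomp : g'.comp g = LinearMap.id := by
      apply DirectSum.linearMap_ext
      intro i
      apply LinearMap.ext
      intro x
      simp only [LinearMap.comp_apply, LinearMap.id_apply, h1, h2]
    exact DFunLike.congr_fun hcomp m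
  have hginj : Function.Injective g := Function.LeftInverse.injective hg'g
  set A := LinearMap.range g with hA
  set Q := LinearMap.range (DirectSum.lof R (Option ι) γ none) with hQ
  have hlofinj : Function.Injective (DirectSum.lof R (Option ι) γ none) :=
    Function.LeftInverse.injective (fun x =>
      DirectSum.component.lof_self (R := R) (ι := Option ι) (M := γ) none x)
  have hg'lofnone : ∀ q : γ none, g' (DirectSum.lof R (Option ι) γ none q) = 0 := by
    intro q
    rw [hg', DirectSum.toModule_lof]
    rfl
  have hAQ : IsCompl A Q := by
    constructor
    · rw [disjoint_iff, eq_bot_iff]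
      rintro x ⟨⟨m, rfl⟩, ⟨q, hq⟩⟩
      have h1 : g' (g m) = m := hg'g m
      rw [← hq, hg'lofnone q] at h1
      rw [← h1]
      simp
    · rw [codisjoint_iff, eq_top_iff]
      intro x _
      induction x using DirectSum.induction_on with
      | zero => exact Submodule.zero_mem _
      | of o y =>
          cases o with
          | none =>
              refine Submodule.mem_sup_right ⟨y, ?_⟩
              rfl
          | some i =>
              refine Submodule.mem_sup_left ⟨DirectSum.lof R ι (fun i => γ (some i)) i y, ?_⟩
              rw [hg, DirectSum.toModule_lof]
              rfl
      | add a b ha hb => exact Submodule.add_mem _ (ha trivial) (hb trivial)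
  set ψ : M ≃ₗ[R] A := LinearEquiv.ofInjective g hginj with hψ
  set eQ : γ none ≃ₗ[R] Q :=
    LinearEquiv.ofInjective (DirectSum.lof R (Option ι) γ none) hlofinj with heQ
  have hQinj : Module.Injective R Q := injective_of_equiv eQ hJ
  set φ : A →ₗ[R] Q := eQ.toLinearMap ∘ₗ f ∘ₗ ψ.symm.toLinearMap with hφ
  have hφinj : Function.Injective φ := by
    simp only [hφ, LinearMap.coe_comp, LinearEquiv.coe_coe]
    exact eQ.injective.comp (hf.comp ψ.symm.injective)
  have hAinj : Module.Injective R A := key_lemma hC3 A Q hAQ hQinj φ hφinj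
  exact injective_of_equiv ψ.symm hAinj

lemma directSum_injective_of_C3
    (h : ∀ (ι : Type u) (E : ι → ModuleCat.{u} R), (∀ i, Module.Injective R (E i)) →
      IsC3Module R (⨁ i, (E i : Type u)))
    (ι : Type u) (E : ι → ModuleCat.{u} R) (hE : ∀ i, Module.Injective R (E i)) :
    Module.Injective R (⨁ i, (E i : Type u)) := by
  classical
  obtain ⟨J, _, _, f, hJinj, hfinj⟩ :=
    exists_embedding_injective (R := R) (⨁ i, (E i : Type u))
  set F : Option ι → ModuleCat.{u} R :=
    fun o => Option.rec (ModuleCat.of R J) (fun i => E i) o with hF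
  have hFinj : ∀ o, Module.Injective R (F o) := by
    rintro (_ | i)
    · exact hJinj
    · exact hE i
  have hC3 : IsC3Module R (⨁ o, (F o : Type u)) := h _ F hFinj
  exact abs_step F hC3 (hFinj none) f hfinj

lemma noetherian_of_directSum_injective
    (h : ∀ (ι : Type u) (β : ι → Type u) (_ : ∀ i, AddCommGroup (β i))
      (_ : ∀ i, Module R (β i)), (∀ i, Module.Injective R (β i)) →
      Module.Injective R (⨁ i, β i)) :
    IsNoetherianRing R := by
  classical
  rw [isNoetherianRing_iff]
  rw [← monotone_stabilizes_iff_noetherian]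
  intro f
  by_contra hc
  push_neg at hc
  -- hc : ∀ n, ∃ m, n ≤ m ∧ f n ≠ f m
  -- injective containers for quotients
  have hexists : ∀ n : ℕ, ∃ (J : Type u) (_ : AddCommGroup J) (_ : Module R J)
      (e : (R ⧸ f n) →ₗ[R] J), Module.Injective R J ∧ Function.Injective e := by
    intro n
    exact exists_embedding_injective (R ⧸ f n)
  choose J hJag hJmod e hJinj heinj using hexists
  -- the direct sum over ULift ℕ
  letI instAG : ∀ n : ℕ, AddCommGroup (J n) := hJag
  letI instMod : ∀ n : ℕ, Module R (J n) := hJmod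
  set D := ⨁ n : ULift.{u} ℕ, J n.down with hD
  have hDinj : Module.Injective R D :=
    h (ULift.{u} ℕ) (fun n => J n.down) (fun n => instAG n.down) (fun n => instMod n.down)
      (fun n => hJinj n.down)
  have hBaer : Module.Baer R D := Module.Baer.of_injective hDinj
  set I : Ideal R := ⨆ n, f n with hI
  -- the componentwise map
  set c : ∀ n : ℕ, ↥I →ₗ[R] J n := fun n => (e n) ∘ₗ (f n).mkQ ∘ₗ I.subtype with hc'
  set Pi : ↥I →ₗ[R] ∀ n : ULift.{u} ℕ, J n.down := LinearMap.pi (fun n => c n.down) with hPi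
  -- coercion from the direct sum to the product
  set coeD : D →ₗ[R] ∀ n : ULift.{u} ℕ, J n.down :=
    { toFun := fun v n => v n
      map_add' := fun u v => funext fun n => DirectSum.add_apply u v n
      map_smul' := fun r v => funext fun n => DFinsupp.smul_apply r v n } with hcoeD
  have hcoeDinj : Function.Injective coeD := by
    intro u v huv
    exact DFinsupp.ext fun n => congrFun huv n
  -- each Pi x is in the range of coeD
  have hmem : ∀ x : ↥I, Pi x ∈ LinearMap.range coeD := by
    rintro ⟨x, hx⟩
    have hx' : x ∈ ⨆ n, f n := hx
    obtain ⟨N, hN⟩ := (Submodule.mem_iSup_of_directed f f.monotone.directed_le).mp hx'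
    set S : Finset (ULift.{u} ℕ) :=
      (Finset.range (N + 1)).map ⟨ULift.up, fun a b hab => by injection hab⟩ with hS
    set u₀ : ∀ n : (↑S : Set (ULift.{u} ℕ)), J (n.1.down) :=
      (fun n => c n.1.down ⟨x, hx⟩) with hu₀
    refine ⟨DirectSum.mk (fun n : ULift.{u} ℕ => J n.down) S u₀, funext fun n => ?_⟩
    show (DirectSum.mk (fun n : ULift.{u} ℕ => J n.down) S u₀) n = Pi ⟨x, hx⟩ n
    by_cases hn : n ∈ S
    · exact (DirectSum.mk_apply_of_mem (β := fun n : ULift.{u} ℕ => J n.down) (f := u₀) hn).trans rfl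
    · refine (DirectSum.mk_apply_of_notMem (β := fun n : ULift.{u} ℕ => J n.down) (f := u₀) hn).trans ?_
      have hge : N < n.down := by
        by_contra hlt
        push_neg at hlt
        exact hn (by
          rw [hS]
          refine Finset.mem_map.mpr ⟨n.down, Finset.mem_range.mpr (by omega), rfl⟩)
      have hxfn : x ∈ f n.down := f.monotone (le_of_lt hge) hN
      have hPin : Pi ⟨x, hx⟩ n = e n.down ((f n.down).mkQ x) := rfl
      have hq0 : (f n.down).mkQ x = 0 := (Submodule.Quotient.mk_eq_zero _).mpr hxfn
      rw [hPin, hq0, map_zero]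
  -- build the map into D
  set Φ : ↥I →ₗ[R] D :=
    (LinearEquiv.ofInjective coeD hcoeDinj).symm.toLinearMap ∘ₗ
      (LinearMap.codRestrict (LinearMap.range coeD) Pi hmem) with hΦ
  have hΦval : ∀ x : ↥I, coeD (Φ x) = Pi x := by
    intro x
    have h1 : (LinearEquiv.ofInjective coeD hcoeDinj) (Φ x)
        = LinearMap.codRestrict (LinearMap.range coeD) Pi hmem x := by
      rw [hΦ]
      simp
    have h2 := congrArg Subtype.val h1
    exact h2
  obtain ⟨G, hG⟩ := hBaer I Φ
  -- finite support of G 1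
  set m := G 1 with hm
  set N₀ : ℕ := (DFinsupp.support m).sup (fun n => n.down) + 1 with hN₀
  have hm0 : ∀ n : ULift.{u} ℕ, N₀ ≤ n.down → m n = 0 := by
    intro n hn
    by_contra h0
    have : n ∈ DFinsupp.support m := DFinsupp.mem_support_iff.mpr h0
    have h2 : n.down ≤ (DFinsupp.support m).sup (fun n => n.down) :=
      Finset.le_sup (f := fun n : ULift.{u} ℕ => n.down) this
    omega
  obtain ⟨k, hk, hne⟩ := hc N₀
  have hlt : f N₀ < f k := lt_of_le_of_ne (f.monotone hk) hne
  obtain ⟨x, hxk, hxN⟩ := SetLike.exists_of_lt hlt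
  have hxI : x ∈ I := (le_iSup f k) hxk
  -- evaluate at component N₀
  have hGx : G x = x • m := by
    have : G x = G (x • 1) := by rw [smul_eq_mul, mul_one]
    rw [this, map_smul, hm]
  have hGx2 : G x = Φ ⟨x, hxI⟩ := hG x hxI
  have hcontra : e N₀ ((f N₀).mkQ x) = 0 := by
    have hA : e N₀ ((f N₀).mkQ x) = Pi ⟨x, hxI⟩ (ULift.up N₀) := rfl
    have hB : Pi ⟨x, hxI⟩ (ULift.up N₀) = coeD (Φ ⟨x, hxI⟩) (ULift.up N₀) :=
      (congrFun (hΦval ⟨x, hxI⟩) (ULift.up N₀)).symm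
    have hC : coeD (Φ ⟨x, hxI⟩) (ULift.up N₀) = (G x) (ULift.up N₀) := by
      rw [hGx2]
      rfl
    have hD' : (G x) (ULift.up N₀) = x • (m (ULift.up N₀)) := by
      rw [hGx]
      exact DFinsupp.smul_apply _ _ _
    rw [hA, hB, hC, hD', hm0 _ (le_refl _), smul_zero]
  have : (f N₀).mkQ x = 0 := heinj N₀ (by rw [hcontra, map_zero])
  exact hxN ((Submodule.Quotient.mk_eq_zero _).mp this)

end AuxC3

open DirectSum in
theorem stmt_7 (R : Type u) [Ring R] :
    IsNoetherianRing R ↔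
      ∀ (ι : Type u) (E : ι → ModuleCat.{u} R), (∀ i, Module.Injective R (E i)) →
        IsC3Module R (⨁ i, E i) := by
  constructor
  · intro hNoeth ι E hE
    exact isC3_of_injective
      (directSum_injective_of_noetherian hNoeth (fun i => ((E i : Type u))) hE)
  · intro h
    apply noetherian_of_directSum_injective
    intro ι β instAG instMod hβ
    letI := instAG
    letI := instMod
    exact directSum_injective_of_C3 h ι (fun i => ModuleCat.of R (β i)) hβ
end

section
/- A ring R is right hereditary if and only if every quotient module of an injective right R-module is a C3-module. -/
universe u v

open CategoryTheory

namespace StmtAux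
variable {R : Type u} [Ring R]

theorem injective_of_equiv {M N : Type u} [AddCommGroup M] [Module R M] [AddCommGroup N]
    [Module R N] (e : M ≃ₗ[R] N) (h : Module.Injective R M) : Module.Injective R N := by
  constructor
  intro X Y _ _ _ _ f hf g
  obtain ⟨h', hh⟩ := h.out f hf (e.symm.toLinearMap ∘ₗ g)
  refine ⟨e.toLinearMap ∘ₗ h', fun x => ?_⟩
  simp [hh x]

theorem injective_prod {A B : Type u} [AddCommGroup A] [Module R A] [AddCommGroup B] [Module R B]
    (hA : Module.Injective R A) (hB : Module.Injective R B) : Module.Injective R (A × B) := by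
  constructor
  intro X Y _ _ _ _ f hf g
  obtain ⟨hA', h1⟩ := hA.out f hf (LinearMap.fst R A B ∘ₗ g)
  obtain ⟨hB', h2⟩ := hB.out f hf (LinearMap.snd R A B ∘ₗ g)
  refine ⟨hA'.prod hB', fun x => ?_⟩
  have e1 := h1 x; have e2 := h2 x
  simp only [LinearMap.comp_apply, LinearMap.fst_apply, LinearMap.snd_apply] at e1 e2
  simp [LinearMap.prod_apply, e1, e2]

theorem isSummand_of_retraction {M : Type u} [AddCommGroup M] [Module R M] (N : Submodule R M)
    (r : M →ₗ[R] N) (hr : ∀ x : N, r (x : M) = x) : IsSummand R N := by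
  refine ⟨LinearMap.ker (N.subtype ∘ₗ r), ?_, ?_⟩
  · rw [Submodule.disjoint_def]
    intro x hxN hxK
    have : N.subtype (r x) = 0 := hxK
    rw [show r x = ⟨x, hxN⟩ from hr ⟨x, hxN⟩] at this
    simpa using this
  · rw [codisjoint_iff, eq_top_iff]
    intro x _
    have hx : x = ((r x : M)) + (x - (r x : M)) := by abel
    rw [hx]
    refine Submodule.add_mem_sup (r x).2 ?_
    simp only [LinearMap.mem_ker, LinearMap.comp_apply, map_sub]
    rw [hr (r x)]
    simp

theorem injective_summand {M : Type u} [AddCommGroup M] [Module R M]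
    (hM : Module.Injective R M) {N : Submodule R M} (h : IsSummand R N) :
    Module.Injective R N := by
  obtain ⟨N', hc⟩ := h
  constructor
  intro X Y _ _ _ _ f hf g
  obtain ⟨h', hh⟩ := hM.out f hf (N.subtype ∘ₗ g)
  refine ⟨Submodule.linearProjOfIsCompl N N' hc ∘ₗ h', fun x => ?_⟩
  simp only [LinearMap.comp_apply, hh x, Submodule.coe_subtype]
  exact Submodule.linearProjOfIsCompl_apply_left hc (g x)

theorem summand_of_injective {M : Type u} [AddCommGroup M] [Module R M] {N : Submodule R M}
    (hN : Module.Injective R N) : IsSummand R N := by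
  obtain ⟨r, hr⟩ := hN.out N.subtype Subtype.val_injective LinearMap.id
  exact isSummand_of_retraction N r (fun x => hr x)

noncomputable def supEquivProd {M : Type u} [AddCommGroup M] [Module R M] (A B : Submodule R M)
    (h : A ⊓ B = ⊥) : (A × B) ≃ₗ[R] ↥(A ⊔ B) := by
  let f : (A × B) →ₗ[R] M := A.subtype.coprod B.subtype
  have hinj : Function.Injective f := by
    rw [← LinearMap.ker_eq_bot]
    ext ⟨a, b⟩
    simp only [LinearMap.mem_ker, Submodule.mem_bot, Prod.mk_eq_zero, LinearMap.coprod_apply,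
      Submodule.coe_subtype, f]
    constructor
    · intro hab
      have heq : (a : M) = -(b : M) := by
        rw [eq_neg_iff_add_eq_zero]; exact hab
      have hmem : (a : M) ∈ A ⊓ B := ⟨a.2, by rw [heq]; exact neg_mem b.2⟩
      rw [h, Submodule.mem_bot] at hmem
      have hb : (b : M) = 0 := by
        have := heq; rw [hmem] at this; simpa using this.symm
      exact ⟨Subtype.ext hmem, Subtype.ext hb⟩
    · rintro ⟨ha, hb⟩
      rw [ha, hb]; simp
  have hrange : LinearMap.range f = A ⊔ B := by
    rw [LinearMap.range_coprod, Submodule.range_subtype, Submodule.range_subtype]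
  exact (LinearEquiv.ofInjective f hinj).trans (LinearEquiv.ofEq _ _ hrange)

theorem isSummand_orderIso {M N : Type u} [AddCommGroup M] [Module R M] [AddCommGroup N]
    [Module R N] (F : Submodule R M ≃o Submodule R N) {A : Submodule R M} (h : IsSummand R A) :
    IsSummand R (F A) := by
  obtain ⟨A', hc⟩ := h
  exact ⟨F A', F.isCompl hc⟩

theorem c3_of_equiv {M N : Type u} [AddCommGroup M] [Module R M] [AddCommGroup N] [Module R N]
    (e : M ≃ₗ[R] N) (h : IsC3Module R M) : IsC3Module R N := by
  intro A B hA hB hAB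
  let F : Submodule R M ≃o Submodule R N := Submodule.orderIsoMapComap e
  have hA' : IsSummand R (F.symm A) := isSummand_orderIso F.symm hA
  have hB' : IsSummand R (F.symm B) := isSummand_orderIso F.symm hB
  have hint : F.symm A ⊓ F.symm B = ⊥ := by
    rw [← F.symm.map_inf, hAB]
    exact F.symm.map_bot
  have := isSummand_orderIso F (h _ _ hA' hB' hint)
  rwa [F.map_sup, F.apply_symm_apply, F.apply_symm_apply] at this

/-- Any module embeds into an injective module in the same universe. -/

theorem exists_injective_embedding (A : Type u) [AddCommGroup A] [Module R A] :
    ∃ (E : ModuleCat.{u} R) (ι : A →ₗ[R] E), Module.Injective R E ∧ Function.Injective ι := by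
  haveI : EnoughInjectives (ModuleCat.{u} R) := inferInstance
  let E := Injective.under (ModuleCat.of R A)
  let ι : ModuleCat.of R A ⟶ E := Injective.ι (ModuleCat.of R A)
  haveI : CategoryTheory.Injective (ModuleCat.of R ↥E) := by
    show CategoryTheory.Injective E
    infer_instance
  refine ⟨E, ι.hom, Module.injective_module_of_injective_object R E, ?_⟩
  exact (ModuleCat.mono_iff_injective ι).mp inferInstance

theorem c3_of_injective {M : Type u} [AddCommGroup M] [Module R M]
    (hM : Module.Injective R M) : IsC3Module R M := by
  intro A B hA hB hAB
  exact summand_of_injective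
    (injective_of_equiv (supEquivProd A B hAB)
      (injective_prod (injective_summand hM hA) (injective_summand hM hB)))

theorem injective_quotient (hproj : ∀ I : Submodule R R, Module.Projective R I)
    {M : Type u} [AddCommGroup M] [Module R M] (hM : Module.Injective R M) (N : Submodule R M) :
    Module.Injective R (M ⧸ N) := by
  apply Module.Baer.injective
  intro I g
  haveI := hproj I
  obtain ⟨g', hg'⟩ := Module.projective_lifting_property N.mkQ g (Submodule.mkQ_surjective N)
  obtain ⟨h, hh⟩ := hM.out I.subtype Subtype.val_injective g'
  refine ⟨N.mkQ ∘ₗ h, fun x mx => ?_⟩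
  have h1 : h x = g' ⟨x, mx⟩ := hh ⟨x, mx⟩
  simp only [LinearMap.comp_apply, h1]
  rw [← hg']; rfl

theorem quot_injective_of_c3
    (hc3 : ∀ (M : Type u) [AddCommGroup M] [Module R M] (N : Submodule R M),
      Module.Injective R M → IsC3Module R (M ⧸ N))
    {E : Type u} [AddCommGroup E] [Module R E] (hE : Module.Injective R E) (K : Submodule R E) :
    Module.Injective R (E ⧸ K) := by
  set Q := E ⧸ K with hQ
  obtain ⟨H, σ, hH, hσ⟩ := exists_injective_embedding (R := R) Q
  -- P := E × H is injective
  have hP : Module.Injective R (E × ↥H) := injective_prod hE hH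
  -- the quotient map onto Q × H
  let φ : (E × ↥H) →ₗ[R] (Q × ↥H) := (K.mkQ).prodMap LinearMap.id
  have hφ : Function.Surjective φ := by
    rintro ⟨q, h⟩
    obtain ⟨e, rfl⟩ := K.mkQ_surjective q
    exact ⟨(e, h), rfl⟩
  have hc3QH : IsC3Module R (Q × ↥H) :=
    c3_of_equiv (φ.quotKerEquivOfSurjective hφ) (hc3 _ (LinearMap.ker φ) hP)
  -- apply C3 to A = Q × 0 and B = graph of σ
  let A : Submodule R (Q × ↥H) := LinearMap.range (LinearMap.inl R Q ↥H)
  let B : Submodule R (Q × ↥H) := LinearMap.range (LinearMap.prod LinearMap.id σ)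
  have hA : IsSummand R A := ⟨LinearMap.range (LinearMap.inr R Q ↥H),
    LinearMap.isCompl_range_inl_inr⟩
  have hB : IsSummand R B := by
    refine ⟨LinearMap.range (LinearMap.inr R Q ↥H), ?_, ?_⟩
    · rw [Submodule.disjoint_def]
      rintro x ⟨y, rfl⟩ ⟨h', hh'⟩
      simp only [LinearMap.prod_apply, Pi.prod, LinearMap.id_coe, id_eq,
        LinearMap.inr_apply] at hh' ⊢
      have h1 : y = 0 := by
        have := congrArg Prod.fst hh'
        simpa using this.symm
      rw [h1]; simp
    · rw [codisjoint_iff, eq_top_iff]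
      rintro ⟨q, h⟩ -
      have : (q, h) = ((q, σ q) : Q × ↥H) + (0, h - σ q) := by
        simp
      rw [this]
      exact Submodule.add_mem_sup ⟨q, rfl⟩ ⟨h - σ q, rfl⟩
  have hAB : A ⊓ B = ⊥ := by
    rw [eq_bot_iff]
    rintro x ⟨⟨y, rfl⟩, ⟨z, hz⟩⟩
    simp only [LinearMap.inl_apply] at hz ⊢
    have h2 : σ z = 0 := congrArg Prod.snd hz
    have h3 : z = 0 := hσ (by simpa using h2)
    have h1 : y = z := (congrArg Prod.fst hz).symm
    simp [h1, h3, Submodule.mem_bot]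
  obtain ⟨C, hC⟩ := hc3QH A B hA hB hAB
  -- A ⊔ B = ⊤ × range σ
  have hsup : A ⊔ B = Submodule.prod ⊤ (LinearMap.range σ) := by
    apply le_antisymm
    · refine sup_le ?_ ?_
      · rintro x ⟨y, rfl⟩; exact ⟨trivial, by simp⟩
      · rintro x ⟨y, rfl⟩; exact ⟨trivial, ⟨y, rfl⟩⟩
    · rintro ⟨q, h⟩ ⟨-, y, rfl⟩
      have : (q, σ y) = ((q - y, 0) : Q × ↥H) + (y, σ y) := by simp
      rw [this]
      exact Submodule.add_mem_sup ⟨q - y, rfl⟩ ⟨y, rfl⟩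
  rw [hsup] at hC
  -- build retraction H → range σ
  set T := Submodule.prod (⊤ : Submodule R Q) (LinearMap.range σ) with hT
  let ρ := Submodule.linearProjOfIsCompl T C hC
  have hmem : ∀ h : ↥H, (LinearMap.snd R Q ↥H) (T.subtype (ρ ((0 : Q), h))) ∈ LinearMap.range σ :=
    fun h => (ρ ((0 : Q), h)).2.2
  let r : ↥H →ₗ[R] ↥(LinearMap.range σ) :=
    LinearMap.codRestrict (LinearMap.range σ)
      ((LinearMap.snd R Q ↥H) ∘ₗ T.subtype ∘ₗ ρ ∘ₗ LinearMap.inr R Q ↥H) (fun h => hmem h)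
  have hr : ∀ x : ↥(LinearMap.range σ), r (x : ↥H) = x := by
    intro x
    apply Subtype.ext
    show (LinearMap.snd R Q ↥H) (T.subtype (ρ ((0 : Q), (x : ↥H)))) = (x : ↥H)
    have hx : ((0 : Q), (x : ↥H)) ∈ T := ⟨trivial, x.2⟩
    have := Submodule.linearProjOfIsCompl_apply_left hC ⟨((0 : Q), (x : ↥H)), hx⟩
    rw [show ρ ((0 : Q), (x : ↥H)) = (⟨((0 : Q), (x : ↥H)), hx⟩ : T) from this]
    rfl
  have hsummand : IsSummand R (LinearMap.range σ) := isSummand_of_retraction _ r hr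
  have : Module.Injective R ↥(LinearMap.range σ) := injective_summand hH hsummand
  exact injective_of_equiv (LinearEquiv.ofInjective σ hσ).symm this

theorem lift_from_ideal
    (hq : ∀ (E : Type u) [AddCommGroup E] [Module R E], Module.Injective R E →
      ∀ K : Submodule R E, Module.Injective R (E ⧸ K))
    {A B : Type u} [AddCommGroup A] [Module R A] [AddCommGroup B] [Module R B]
    (f : A →ₗ[R] B) (hf : Function.Surjective f) (I : Submodule R R) (g : I →ₗ[R] B) :
    ∃ h : I →ₗ[R] A, f ∘ₗ h = g := by
  obtain ⟨E, ι, hE, hι⟩ := exists_injective_embedding (R := R) A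
  set K : Submodule R ↥E := (LinearMap.ker f).map ι with hK
  have hEK : Module.Injective R (↥E ⧸ K) := hq ↥E hE K
  -- ψ : A → E/K
  let ψ : A →ₗ[R] (↥E ⧸ K) := K.mkQ ∘ₗ ι
  have hle : LinearMap.ker f ≤ LinearMap.ker ψ := by
    intro x hx
    have hmem : ι x ∈ K := Submodule.mem_map_of_mem hx
    simp only [LinearMap.mem_ker, LinearMap.comp_apply, ψ, Submodule.mkQ_apply,
      Submodule.Quotient.mk_eq_zero]
    exact hmem
  -- φ₀ : B → E/K factoring ψ through f
  let eq := f.quotKerEquivOfSurjective hf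
  let φ₀ : B →ₗ[R] (↥E ⧸ K) := (Submodule.liftQ (LinearMap.ker f) ψ hle) ∘ₗ eq.symm.toLinearMap
  have hφ₀ : ∀ a : A, φ₀ (f a) = ψ a := by
    intro a
    have h1 : eq.symm (f a) = Submodule.Quotient.mk a := by
      apply eq.injective
      rw [LinearEquiv.apply_symm_apply]
      rfl
    simp only [LinearMap.comp_apply, LinearEquiv.coe_coe, φ₀, h1]
    exact Submodule.liftQ_apply _ _ _
  -- extend φ₀ ∘ g : I → E/K to R
  obtain ⟨Φ, hΦ⟩ := hEK.out I.subtype Subtype.val_injective (φ₀ ∘ₗ g)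
  obtain ⟨e, he⟩ := K.mkQ_surjective (Φ 1)
  -- key pointwise identity
  have key : ∀ x : I, φ₀ (g x) = K.mkQ ((x : R) • e) := by
    intro x
    have h1 : Φ (x : R) = φ₀ (g x) := hΦ x
    have h2 : Φ (x : R) = (x : R) • Φ 1 := by
      rw [← map_smul, smul_eq_mul, mul_one]
    rw [← h1, h2, ← he, ← map_smul]
  -- for each x, find a preimage in A
  have key2 : ∀ x : I, ∃ a : A, ι a = (x : R) • e ∧ f a = g x := by
    intro x
    obtain ⟨a₀, ha₀⟩ := hf (g x)
    have h3 : K.mkQ ((x : R) • e - ι a₀) = 0 := by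
      rw [map_sub, ← key x, ← ha₀, hφ₀]
      simp [ψ]
    rw [Submodule.mkQ_apply, Submodule.Quotient.mk_eq_zero] at h3
    obtain ⟨k, hk, hik⟩ := h3
    refine ⟨a₀ + k, ?_, ?_⟩
    · rw [map_add, hik]; abel
    · rw [map_add, ha₀, LinearMap.mem_ker.mp hk, add_zero]
  choose ha h1 h2 using key2
  -- h is linear thanks to injectivity of ι
  refine ⟨{ toFun := ha, map_add' := ?_, map_smul' := ?_ }, ?_⟩
  · intro x y
    apply hι
    rw [map_add, h1, h1, h1, Submodule.coe_add, add_smul]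
  · intro r x
    apply hι
    rw [h1, map_smul, h1, Submodule.coe_smul, smul_eq_mul, mul_smul]
    rfl
  · ext x
    exact h2 x

theorem ideal_projective
    (hq : ∀ (E : Type u) [AddCommGroup E] [Module R E], Module.Injective R E →
      ∀ K : Submodule R E, Module.Injective R (E ⧸ K))
    (I : Submodule R R) : Module.Projective R I := by
  let π : (↥I →₀ R) →ₗ[R] ↥I := Finsupp.linearCombination R _root_.id
  have hπ : Function.Surjective π := by
    intro x
    exact ⟨Finsupp.single x 1, by simp [π]⟩
  obtain ⟨s, hs⟩ := lift_from_ideal hq π hπ I LinearMap.id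
  exact Module.Projective.of_split s π hs

end StmtAux

theorem stmt_8 (R : Type u) [Ring R] :
    (∀ I : Submodule R R, Module.Projective R I) ↔
      ∀ (M : Type u) [AddCommGroup M] [Module R M] (N : Submodule R M),
        Module.Injective R M → IsC3Module R (M ⧸ N) := by
  constructor
  · intro hproj M _ _ N hM
    exact StmtAux.c3_of_injective (StmtAux.injective_quotient hproj hM N)
  · intro hc3 I
    exact StmtAux.ideal_projective
      (fun E _ _ hE K => StmtAux.quot_injective_of_c3 hc3 hE K) I
end

section
/- Let R be a ring such that the class of all C1 right R-modules is closed under finite direct sums. Let N be a C1-module such that Hom_R(N, E(R)) = 0, where E(R) is the injective hull of the right R-module R. Then N is injective. -/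
universe u v

open CategoryTheory

section Aux
variable {R : Type u} [Ring R]

lemma myNeBotMono {M : Type v} [AddCommGroup M] [Module R M] {p q : Submodule R M}
    (h : p ≤ q) (hp : p ≠ ⊥) : q ≠ ⊥ :=
  fun hq => hp (le_bot_iff.mp (hq ▸ h))

lemma myEssSelf {M : Type v} [AddCommGroup M] [Module R M] (A : Submodule R M) :
    IsEssentialIn R A A :=
  ⟨le_rfl, fun K hK hKne => by rwa [inf_eq_right.mpr hK]⟩

lemma myEssTrans {M : Type v} [AddCommGroup M] [Module R M] {A B C : Submodule R M}
    (h1 : IsEssentialIn R A B) (h2 : IsEssentialIn R B C) : IsEssentialIn R A C := by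
  refine ⟨h1.1.trans h2.1, fun K hK hKne => ?_⟩
  have hBK : B ⊓ K ≠ ⊥ := h2.2 K hK hKne
  have h3 : A ⊓ (B ⊓ K) ≠ ⊥ := h1.2 (B ⊓ K) inf_le_left hBK
  exact myNeBotMono (le_inf inf_le_left (inf_le_right.trans inf_le_right)) h3

lemma myExistsMaxEss {M : Type v} [AddCommGroup M] [Module R M] (A : Submodule R M) :
    ∃ D, IsEssentialIn R A D ∧ ∀ X, IsEssentialIn R A X → D ≤ X → X = D := by
  have hchaincond : ∀ c ⊆ {D | IsEssentialIn R A D}, IsChain (· ≤ ·) c →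
      ∀ y ∈ c, ∃ ub ∈ {D | IsEssentialIn R A D}, ∀ z ∈ c, z ≤ ub := by
    intro c hcs hchain y hy
    refine ⟨sSup c, ⟨le_trans (hcs hy).1 (le_sSup hy), ?_⟩, fun z hz => le_sSup hz⟩
    intro K hK hKne
    obtain ⟨x, hxK, hx0⟩ := (Submodule.ne_bot_iff _).mp hKne
    have hxs : x ∈ sSup c := hK hxK
    obtain ⟨X, hXc, hxX⟩ := (Submodule.mem_sSup_of_directed ⟨y, hy⟩ hchain.directedOn).mp hxs
    have hspan : Submodule.span R {x} ≤ X := by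
      rwa [Submodule.span_singleton_le_iff_mem]
    have hspanne : Submodule.span R {x} ≠ ⊥ := by
      simpa [Submodule.span_singleton_eq_bot] using hx0
    have h5 := (hcs hXc).2 (Submodule.span R {x}) hspan hspanne
    refine myNeBotMono (le_inf inf_le_left ?_) h5
    exact inf_le_right.trans ((Submodule.span_singleton_le_iff_mem x K).mpr hxK)
  obtain ⟨D, -, hD⟩ := zorn_le_nonempty₀ {D | IsEssentialIn R A D} hchaincond A (myEssSelf A)
  exact ⟨D, hD.1, fun X hX hDX => le_antisymm (hD.2 hX hDX) hDX⟩

lemma myExistsMaxCompl {M : Type v} [AddCommGroup M] [Module R M] (D : Submodule R M) :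
    ∃ C : Submodule R M, C ⊓ D = ⊥ ∧ ∀ X : Submodule R M, X ⊓ D = ⊥ → C ≤ X → X = C := by
  have hchaincond : ∀ c ⊆ {C : Submodule R M | C ⊓ D = ⊥}, IsChain (· ≤ ·) c →
      ∀ y ∈ c, ∃ ub ∈ {C : Submodule R M | C ⊓ D = ⊥}, ∀ z ∈ c, z ≤ ub := by
    intro c hcs hchain y hy
    refine ⟨sSup c, ?_, fun z hz => le_sSup hz⟩
    rw [Set.mem_setOf_eq, eq_bot_iff]
    intro x hx
    obtain ⟨X, hXc, hxX⟩ := (Submodule.mem_sSup_of_directed ⟨y, hy⟩ hchain.directedOn).mp hx.1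
    have hmem : x ∈ X ⊓ D := ⟨hxX, hx.2⟩
    rwa [hcs hXc] at hmem
  obtain ⟨C, -, hC⟩ := zorn_le_nonempty₀ {C : Submodule R M | C ⊓ D = ⊥} hchaincond ⊥ (by simp)
  exact ⟨C, hC.1, fun X hX hCX => le_antisymm (hC.2 hX hCX) hCX⟩

lemma myInjIsC1 {E : Type v} [AddCommGroup E] [Module R E] (hEinj : Module.Injective R E) :
    IsC1Module R E := by
  intro A
  obtain ⟨D, hAD, hDmax⟩ := myExistsMaxEss A
  obtain ⟨C, hCD, hCmax⟩ := myExistsMaxCompl D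
  have hDC : D ⊓ C = ⊥ := by rw [inf_comm]; exact hCD
  set ι : (↥D × ↥C) →ₗ[R] E := D.subtype.coprod C.subtype with hιdef
  have hι : Function.Injective ι := by
    rw [← LinearMap.ker_eq_bot, eq_bot_iff]
    rintro ⟨d, c⟩ h
    have h0 : (d : E) + (c : E) = 0 := h
    have hd : (d : E) ∈ D ⊓ C := ⟨d.2, by
      have he' : (d : E) = -(c : E) := by
        rw [eq_neg_iff_add_eq_zero]; exact h0
      rw [he']; exact neg_mem c.2⟩
    rw [hDC] at hd
    have hd0 : (d : E) = 0 := hd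
    have hc0 : (c : E) = 0 := by rwa [hd0, zero_add] at h0
    exact (Submodule.mem_bot _).mpr (Prod.ext (Subtype.ext hd0) (Subtype.ext hc0))
  obtain ⟨g, hg⟩ := hEinj.out ι hι (D.subtype.comp (LinearMap.fst R ↥D ↥C))
  have hgD : ∀ x ∈ D, g x = x := by
    intro x hx
    have h1 := hg (⟨x, hx⟩, 0)
    simpa [hιdef] using h1
  have hgC : ∀ x ∈ C, g x = 0 := by
    intro x hx
    have h1 := hg (0, ⟨x, hx⟩)
    simpa [hιdef] using h1
  have hDle : D ≤ LinearMap.range g := fun x hx => ⟨x, hgD x hx⟩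
  have hessR : IsEssentialIn R D (LinearMap.range g) := by
    refine ⟨hDle, fun K hK hKne => ?_⟩
    obtain ⟨x, hxK, hx0⟩ := (Submodule.ne_bot_iff _).mp hKne
    obtain ⟨e, he⟩ := hK hxK
    by_cases H : ∀ r : R, r • x ∈ D → r • x = 0
    · exfalso
      have hsup : (C ⊔ Submodule.span R {e}) ⊓ D = ⊥ := by
        rw [eq_bot_iff]
        rintro d ⟨hd1, hd2⟩
        obtain ⟨c, hc, s, hs, hcs⟩ := Submodule.mem_sup.mp hd1
        obtain ⟨r, hr⟩ := Submodule.mem_span_singleton.mp hs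
        have hs' : s = d - c := by rw [← hcs]; abel
        have h1 : g s = d := by rw [hs', map_sub, hgD d hd2, hgC c hc, sub_zero]
        have h2 : g s = r • x := by rw [← hr, map_smul, he]
        have h3 : r • x = d := by rw [← h2, h1]
        have h4 : r • x = 0 := H r (by rw [h3]; exact hd2)
        rw [Submodule.mem_bot, ← h3, h4]
      have hCe : C ⊔ Submodule.span R {e} = C := hCmax _ hsup le_sup_left
      have heC : e ∈ C := by
        have h6 : Submodule.span R {e} ≤ C := by
          rw [← hCe]; exact le_sup_right
        exact h6 (Submodule.mem_span_singleton_self e)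
      exact hx0 (by rw [← he, hgC e heC])
    · push_neg at H
      obtain ⟨r, hrD, hr0⟩ := H
      refine myNeBotMono ((Submodule.span_singleton_le_iff_mem (r • x) _).mpr
        ⟨hrD, Submodule.smul_mem _ r hxK⟩) ?_
      simpa [Submodule.span_singleton_eq_bot] using hr0
  have hrange : LinearMap.range g = D := hDmax _ (myEssTrans hAD hessR) hDle
  have hidem : ∀ e : E, g (g e) = g e := fun e =>
    hgD _ (hrange ▸ LinearMap.mem_range_self g e)
  refine ⟨D, ⟨LinearMap.ker g, ?_, ?_⟩, hAD⟩
  · rw [Submodule.disjoint_def]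
    intro x hxD hxK
    rw [← hgD x hxD]
    exact hxK
  · rw [codisjoint_iff, eq_top_iff]
    intro e _
    have hge : g e ∈ D := hrange ▸ LinearMap.mem_range_self g e
    have hker : e - g e ∈ LinearMap.ker g := by
      rw [LinearMap.mem_ker, map_sub, hidem, sub_self]
    have hsum : g e + (e - g e) = e := by abel
    rw [← hsum]
    exact Submodule.add_mem_sup hge hker

lemma myEssMap {M : Type v} [AddCommGroup M] [Module R M] {M' : Type w} [AddCommGroup M']
    [Module R M'] (e : M ≃ₗ[R] M') {A B : Submodule R M} (h : IsEssentialIn R A B) :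
    IsEssentialIn R (Submodule.orderIsoMapComap e A) (Submodule.orderIsoMapComap e B) := by
  set φ := Submodule.orderIsoMapComap e with hφ
  refine ⟨φ.monotone h.1, fun K hK hKne => ?_⟩
  have h1 : φ.symm K ≤ B := by
    have := φ.symm.monotone hK
    rwa [OrderIso.symm_apply_apply] at this
  have h2 : φ.symm K ≠ ⊥ := by
    intro hc
    apply hKne
    have := congrArg φ hc
    rwa [OrderIso.apply_symm_apply, map_bot] at this
  have h3 := h.2 (φ.symm K) h1 h2
  intro hc
  apply h3
  have h4 : φ (A ⊓ φ.symm K) = ⊥ := by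
    rw [OrderIso.map_inf, OrderIso.apply_symm_apply, hc]
  have := congrArg φ.symm h4
  rwa [OrderIso.symm_apply_apply, map_bot] at this

lemma myC1Congr {M : Type v} [AddCommGroup M] [Module R M] {M' : Type w} [AddCommGroup M']
    [Module R M'] (e : M ≃ₗ[R] M') (h : IsC1Module R M) : IsC1Module R M' := by
  intro A
  set φ := Submodule.orderIsoMapComap e with hφ
  obtain ⟨D, ⟨D', hcompl⟩, hess⟩ := h (φ.symm A)
  refine ⟨φ D, ⟨φ D', φ.isCompl hcompl⟩, ?_⟩
  have := myEssMap e hess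
  rwa [OrderIso.apply_symm_apply] at this

end Aux

theorem stmt_9 (R : Type u) [Ring R]
    (hsum : ClosedUnderFiniteDirectSums R (fun M : ModuleCat.{u} R => IsC1Module R M))
    (N : Type u) [AddCommGroup N] [Module R N] (hN : IsC1Module R N)
    (E : Type u) [AddCommGroup E] [Module R E] (hEinj : Module.Injective R E)
    (i : R →ₗ[R] E) (hi : Function.Injective i)
    (hess : IsEssentialIn R (LinearMap.range i) (⊤ : Submodule R E))
    (hhom : ∀ f : N →ₗ[R] E, f = 0) :
    Module.Injective R N := by
  classical
  have hE1 : IsC1Module R E := myInjIsC1 hEinj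
  -- N × E is a C1 module
  have hP : IsC1Module R (N × E) := by
    set Mfam : Fin 2 → ModuleCat.{u} R := ![ModuleCat.of R N, ModuleCat.of R E] with hMfam
    have hfam : ∀ j, IsC1Module R (Mfam j) := by
      intro j
      fin_cases j
      · exact hN
      · exact hE1
    have hP0 : IsC1Module R (ModuleCat.of R (∀ j, Mfam j)) := hsum 2 Mfam hfam
    exact myC1Congr (LinearEquiv.piFinTwo R fun j => (Mfam j : Type u)) hP0
  -- Baer's criterion
  apply Module.Baer.injective
  intro I f
  set k : ↥I →ₗ[R] N × E := f.prod (i.comp I.subtype) with hk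
  set K := LinearMap.range k with hK
  obtain ⟨D, ⟨D', hDD'⟩, hKD, hKess⟩ := hP K
  set W := LinearMap.ker (LinearMap.snd R N E) with hW
  have hKW : K ⊓ W = ⊥ := by
    rw [eq_bot_iff]
    rintro x ⟨hx1, hx2⟩
    obtain ⟨y, hy⟩ := hx1
    have h1 : i y.1 = 0 := by
      have := congrArg Prod.snd hy
      simp [hk] at this
      rw [this]
      exact hx2
    have h2 : y.1 = 0 := hi (by rw [h1, map_zero])
    have h3 : y = 0 := Subtype.ext h2
    rw [Submodule.mem_bot, ← hy, h3, map_zero]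
  have hDW : D ⊓ W = ⊥ := by
    by_contra hne
    have h1 := hKess (D ⊓ W) inf_le_left hne
    exact h1 (le_bot_iff.mp (hKW ▸ le_inf inf_le_left (inf_le_right.trans inf_le_right)))
  set pD := Submodule.projectionOnto D D' hDD' with hpD
  set δ : N →ₗ[R] E := (LinearMap.snd R N E).comp (D.subtype.comp (pD.comp (LinearMap.inl R N E))) with hδ
  have hδ0 : δ = 0 := hhom δ
  have hNinD' : ∀ n : N, ((n, 0) : N × E) ∈ D' := by
    intro n
    have h1 : ((pD (n, 0) : N × E)).2 = 0 := by
      have := congrFun (congrArg DFunLike.coe hδ0) n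
      simpa [hδ] using this
    have h2 : (pD (n, 0) : N × E) ∈ D ⊓ W := ⟨(pD (n, 0)).2, h1⟩
    rw [hDW, Submodule.mem_bot] at h2
    have h3 : pD (n, 0) = 0 := Subtype.ext h2
    have h4 : ((n, 0) : N × E) ∈ LinearMap.ker pD := by
      rw [LinearMap.mem_ker]; exact h3
    rwa [Submodule.ker_projectionOnto] at h4
  set pD' := Submodule.projectionOnto D' D hDD'.symm with hpD'
  refine ⟨-((LinearMap.fst R N E).comp (D'.subtype.comp (pD'.comp ((LinearMap.inr R N E).comp i)))), ?_⟩
  intro x hx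
  have hxK : ((f ⟨x, hx⟩, i x) : N × E) ∈ D := hKD ⟨⟨x, hx⟩, by simp [hk]⟩
  have h1 : pD' ((f ⟨x, hx⟩, i x) : N × E) = 0 :=
    Submodule.projectionOnto_apply_of_mem_right hDD'.symm hxK
  have h2 : pD' ((f ⟨x, hx⟩, 0) : N × E) = ⟨(f ⟨x, hx⟩, 0), hNinD' _⟩ :=
    Submodule.projectionOnto_apply_left hDD'.symm ⟨(f ⟨x, hx⟩, 0), hNinD' _⟩
  have h3 : ((0, i x) : N × E) = (f ⟨x, hx⟩, i x) - (f ⟨x, hx⟩, 0) := by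
    simp
  have h4 : pD' ((0, i x) : N × E) = -⟨(f ⟨x, hx⟩, 0), hNinD' _⟩ := by
    rw [h3, map_sub, h1, h2, zero_sub]
  simp only [LinearMap.neg_apply, LinearMap.comp_apply, LinearMap.inr_apply]
  rw [h4]
  simp
end

section
/- Let R be a right noetherian ring such that the class of all C1 right R-modules is preenveloping. Then the class of all C1 right R-modules is closed under arbitrary direct sums. -/
universe u v

open CategoryTheory

section C1Aux

variable {R : Type u} [Ring R]

lemma inf_ne_bot_mono' {P : Type v} [AddCommGroup P] [Module R P]
    {A B B' : Submodule R P} (hBB' : B ≤ B') (h : A ⊓ B ≠ ⊥) : A ⊓ B' ≠ ⊥ := by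
  intro hb
  exact h (le_bot_iff.mp (hb ▸ inf_le_inf_left A hBB'))

lemma isC1_of_equiv {M N : Type v} [AddCommGroup M] [Module R M] [AddCommGroup N] [Module R N]
    (e : M ≃ₗ[R] N) (hM : IsC1Module R M) : IsC1Module R N := by
  intro N'
  obtain ⟨D, ⟨D', hc⟩, hle, hess⟩ := hM (N'.comap (e : M →ₗ[R] N))
  let f : Submodule R M ≃o Submodule R N := Submodule.orderIsoMapComap e
  have hfN' : f (N'.comap (e : M →ₗ[R] N)) = N' := by
    show (N'.comap (e : M →ₗ[R] N)).map (e : M →ₗ[R] N) = N'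
    rw [Submodule.map_comap_eq, inf_eq_right.mpr]
    intro x _
    exact ⟨e.symm x, by simp⟩
  refine ⟨f D, ⟨f D', ⟨?_, ?_⟩⟩, ?_, ?_⟩
  · rw [disjoint_iff, ← f.map_inf, disjoint_iff.mp hc.disjoint, f.map_bot]
  · rw [codisjoint_iff, ← f.map_sup, codisjoint_iff.mp hc.codisjoint, f.map_top]
  · rw [← hfN']; exact f.monotone hle
  · intro K hK hKne
    have h1 : f.symm K ≤ D := by
      have := f.symm.monotone hK; rwa [f.symm_apply_apply] at this
    have h2 : f.symm K ≠ ⊥ := by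
      intro hb
      apply hKne
      rw [← f.apply_symm_apply K, hb, f.map_bot]
    have h3 := hess (f.symm K) h1 h2
    intro hb
    apply h3
    have : f (N'.comap (e : M →ₗ[R] N) ⊓ f.symm K) = ⊥ := by
      rw [f.map_inf, hfN', f.apply_symm_apply, hb]
    rw [← f.symm_apply_apply (N'.comap (e : M →ₗ[R] N) ⊓ f.symm K), this]
    exact f.symm.map_bot

lemma isC1_summand {P : Type v} [AddCommGroup P] [Module R P]
    (hP : IsC1Module R P) (S C : Submodule R P) (hSC : IsCompl S C) :
    IsC1Module R ↥S := by
  classical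
  intro N'
  set Nb : Submodule R P := N'.map S.subtype with hNbdef
  have hNbS : Nb ≤ S := by
    rintro x ⟨n, _, rfl⟩; exact n.2
  set 𝒮 : Set (Submodule R P) := {X | X ≤ S ∧ IsEssentialIn R Nb X} with h𝒮def
  have hNbmem : Nb ∈ 𝒮 := ⟨hNbS, le_rfl, fun K hK hKne => by rwa [inf_eq_right.mpr hK]⟩
  have hchain : ∀ c ⊆ 𝒮, IsChain (· ≤ ·) c → ∀ y ∈ c, ∃ ub ∈ 𝒮, ∀ z ∈ c, z ≤ ub := by
    intro c hc hchain y hy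
    refine ⟨sSup c, ⟨?_, ?_, ?_⟩, fun z hz => le_sSup hz⟩
    · exact sSup_le (fun X hX => (hc hX).1)
    · exact le_trans (hc hy).2.1 (le_sSup hy)
    · intro K hK hKne
      obtain ⟨k, hkK, hk0⟩ := Submodule.exists_mem_ne_zero_of_ne_bot hKne
      obtain ⟨X, hXc, hkX⟩ := (Submodule.mem_sSup_of_directed ⟨y, hy⟩ hchain.directedOn).mp (hK hkK)
      have h1 : Submodule.span R {k} ≤ X := (Submodule.span_singleton_le_iff_mem k X).mpr hkX
      have h2 : Submodule.span R {k} ≠ ⊥ := by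
        simpa [Submodule.span_singleton_eq_bot] using hk0
      have h3 := (hc hXc).2.2 _ h1 h2
      exact inf_ne_bot_mono' ((Submodule.span_singleton_le_iff_mem k K).mpr hkK) h3
  obtain ⟨Cs, hNbCs, hCsM⟩ := zorn_le_nonempty₀ 𝒮 hchain Nb hNbmem
  have hCsmem : Cs ∈ 𝒮 := hCsM.1
  have hCsmax : ∀ Z ∈ 𝒮, Cs ≤ Z → Z = Cs := fun Z hZ hle => le_antisymm (hCsM.2 hZ hle) hle
  obtain ⟨hCsS, hessNbCs⟩ := hCsmem
  have hclosed : ∀ X : Submodule R P, IsEssentialIn R Cs X → X = Cs := by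
    rintro X ⟨hCsX, hessX⟩
    set π : P →ₗ[R] P := S.subtype.comp (S.projectionOnto C hSC) with hπdef
    have hπS : ∀ x ∈ S, π x = x := fun x hx => by
      simp [hπdef, Submodule.projectionOnto_apply_of_mem_left hSC hx]
    have hπmemS : ∀ x, π x ∈ S := fun x => (S.projectionOnto C hSC x).2
    have hπker : ∀ x, x - π x ∈ C := by
      intro x
      obtain ⟨s, hs, c, hc, rfl⟩ := Submodule.mem_sup.mp (hSC.codisjoint.eq_top ▸ Submodule.mem_top (x := x))
      have : π (s + c) = s := by
        simp [hπdef, Submodule.projectionOnto_apply_of_mem_left hSC hs,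
          Submodule.projectionOnto_apply_of_mem_right hSC hc]
      rw [this]; simpa using hc
    set Y : Submodule R P := X.map π with hYdef
    have hCsY : Cs ≤ Y := by
      intro x hx
      exact ⟨x, hCsX hx, hπS x (hCsS hx)⟩
    have hYmem : Y ∈ 𝒮 := by
      refine ⟨?_, le_trans hNbCs hCsY, ?_⟩
      · rintro y ⟨x, _, rfl⟩; exact hπmemS x
      · intro K hK hKne
        obtain ⟨k, hkK, hk0⟩ := Submodule.exists_mem_ne_zero_of_ne_bot hKne
        obtain ⟨x, hxX, hxk⟩ := hK hkK
        have hx0 : x ≠ 0 := by rintro rfl; simp at hxk; exact hk0 hxk.symm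
        have h1 : Submodule.span R {x} ≤ X := (Submodule.span_singleton_le_iff_mem x X).mpr hxX
        have h2 : Submodule.span R {x} ≠ ⊥ := by simpa [Submodule.span_singleton_eq_bot] using hx0
        have h3 := hessX _ h1 h2
        obtain ⟨z, ⟨hzCs, hzspan⟩, hz0⟩ := Submodule.exists_mem_ne_zero_of_ne_bot h3
        obtain ⟨r, hr⟩ := Submodule.mem_span_singleton.mp hzspan
        have hzK : z ∈ K := by
          have : π z = z := hπS z (hCsS hzCs)
          rw [← this, ← hr, map_smul, hxk]
          exact K.smul_mem r hkK
        have h4 : Cs ⊓ K ≠ ⊥ := by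
          intro hb
          have : z ∈ (⊥ : Submodule R P) := hb ▸ ⟨hzCs, hzK⟩
          exact hz0 (by simpa using this)
        have h5 := hessNbCs.2 (Cs ⊓ K) inf_le_left h4
        exact inf_ne_bot_mono' inf_le_right h5
    have hYCs : Y = Cs := hCsmax Y hYmem hCsY
    have hXC : X ⊓ C = ⊥ := by
      by_contra hne
      have := hessX (X ⊓ C) inf_le_left hne
      apply this
      rw [eq_bot_iff]
      rintro z ⟨hz1, _, hz3⟩
      simpa using hSC.disjoint.le_bot ⟨hCsS hz1, hz3⟩
    refine le_antisymm ?_ hCsX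
    intro x hx
    have hπx : π x ∈ Cs := hYCs ▸ ⟨x, hx, rfl⟩
    have hxπx : x - π x ∈ X ⊓ C := ⟨X.sub_mem hx (hCsX hπx), hπker x⟩
    have h0 : x - π x = 0 := by
      have := hXC ▸ hxπx
      simpa using this
    rw [sub_eq_zero] at h0
    rw [h0]
    exact hπx
  obtain ⟨D, ⟨D', hDD'⟩, hessD⟩ := hP Cs
  have hDCs : D = Cs := hclosed D hessD
  rw [hDCs] at hDD'
  refine ⟨Cs.comap S.subtype, ⟨(D' ⊓ S).comap S.subtype, ?_, ?_⟩, ?_, ?_⟩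
  · rw [disjoint_iff, eq_bot_iff]
    rintro x ⟨hx1, hx2, -⟩
    have h1 : (x : P) ∈ Cs ⊓ D' := ⟨hx1, hx2⟩
    have h2 := hDD'.disjoint.le_bot h1
    have h3 : (x : P) = 0 := by simpa using h2
    simpa [Submodule.mem_bot] using Subtype.ext h3
  · rw [codisjoint_iff, eq_top_iff]
    rintro x -
    have hx : (x : P) ∈ Cs ⊔ D' := hDD'.codisjoint.eq_top ▸ Submodule.mem_top
    obtain ⟨a, ha, b, hb, hab⟩ := Submodule.mem_sup.mp hx
    have haS : a ∈ S := hCsS ha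
    have hbS : b ∈ S := by
      have hba : b = (x : P) - a := by rw [← hab]; abel
      rw [hba]; exact S.sub_mem x.2 haS
    refine Submodule.mem_sup.mpr ⟨⟨a, haS⟩, ha, ⟨b, hbS⟩, ⟨hb, hbS⟩, ?_⟩
    exact Subtype.ext (by simpa using hab)
  · intro n hn
    exact hNbCs ⟨n, hn, rfl⟩
  · intro K hK hKne
    set Kt : Submodule R P := K.map S.subtype with hKtdef
    have hKtCs : Kt ≤ Cs := by rintro z ⟨k, hk, rfl⟩; exact hK hk
    have hKtne : Kt ≠ ⊥ := by
      obtain ⟨k, hkK, hk0⟩ := Submodule.exists_mem_ne_zero_of_ne_bot hKne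
      intro hb
      have h1 : (k : P) ∈ (⊥ : Submodule R P) := hb ▸ ⟨k, hkK, rfl⟩
      rw [Submodule.mem_bot] at h1
      exact hk0 (Subtype.ext h1)
    have h3 := hessNbCs.2 Kt hKtCs hKtne
    obtain ⟨z, ⟨hzNb, hzKt⟩, hz0⟩ := Submodule.exists_mem_ne_zero_of_ne_bot h3
    obtain ⟨n, hn, hnz⟩ := hzNb
    obtain ⟨k, hk, hkz⟩ := hzKt
    have hnk : n = k := Subtype.ext (by rw [show ((n : P)) = z from hnz, ← hkz]; rfl)
    intro hb
    have h4 : n ∈ N' ⊓ K := ⟨hn, hnk ▸ hk⟩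
    rw [hb, Submodule.mem_bot] at h4
    apply hz0
    rw [← hnz, h4]
    simp

section Noeth

variable {ι : Type v} {β : ι → Type v} [∀ i, AddCommGroup (β i)] [∀ i, Module R (β i)]

open DirectSum

/-- The canonical inclusion of a direct sum into the direct product. -/
noncomputable def φmap : (⨁ i, β i) →ₗ[R] (∀ i, β i) :=
  LinearMap.pi (fun i => DFinsupp.lapply i)

lemma φmap_apply (x : ⨁ i, β i) (i : ι) : φmap (R := R) x i = x i := rfl

lemma mem_range_φmap_iff (y : ∀ i, β i) :
    y ∈ LinearMap.range (φmap (R := R) (β := β)) ↔ ∃ G : Finset ι, ∀ i ∉ G, y i = 0 := by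
  classical
  constructor
  · rintro ⟨x, rfl⟩
    exact ⟨x.support, fun i hi => by
      rw [φmap_apply]
      exact DFinsupp.notMem_support_iff.mp hi⟩
  · rintro ⟨G, hG⟩
    refine ⟨DFinsupp.mk G (fun i => y i), ?_⟩
    funext i
    rw [φmap_apply, DFinsupp.mk_apply]
    split
    · rfl
    · exact (hG i (by assumption)).symm

/-- Over a noetherian ring, the direct sum is a closed (essentially closed) submodule of the
direct product. -/
lemma directSum_closed [IsNoetherianRing R]
    (X : Submodule R (∀ i, β i))
    (hX : IsEssentialIn R (LinearMap.range (φmap (R := R) (β := β))) X) :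
    X = LinearMap.range (φmap (R := R) (β := β)) := by
  classical
  set S : Submodule R (∀ i, β i) := LinearMap.range (φmap (R := R) (β := β)) with hSdef
  refine le_antisymm ?_ hX.1
  intro t ht
  set ann : Finset ι → Submodule R R := fun G =>
    ⨅ (i : ι) (_ : i ∉ G), LinearMap.ker (LinearMap.toSpanSingleton R (β i) (t i)) with hanndef
  have mem_ann : ∀ (G : Finset ι) (r : R), r ∈ ann G ↔ ∀ i ∉ G, r • t i = 0 := by
    intro G r
    simp [hanndef, Submodule.mem_iInf, LinearMap.mem_ker, LinearMap.toSpanSingleton_apply]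
  have hmono : ∀ G G' : Finset ι, G ⊆ G' → ann G ≤ ann G' := by
    intro G G' hGG' r hr
    rw [mem_ann] at hr ⊢
    exact fun i hi => hr i (fun hiG => hi (hGG' hiG))
  obtain ⟨A, hAmem, hAmax⟩ := (set_has_maximal_iff_noetherian.mpr inferInstance)
    (Set.range ann) ⟨ann ∅, Set.mem_range_self _⟩
  obtain ⟨G₀, rfl⟩ := hAmem
  have hGmax : ∀ G : Finset ι, ann G ≤ ann G₀ := by
    intro G
    have h1 : ann G₀ ≤ ann (G₀ ∪ G) := hmono _ _ Finset.subset_union_left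
    have h2 : ann (G₀ ∪ G) = ann G₀ := by
      by_contra hne
      exact hAmax (ann (G₀ ∪ G)) (Set.mem_range_self _) (lt_of_le_of_ne h1 (Ne.symm hne))
    exact h2 ▸ hmono _ _ Finset.subset_union_right
  set tG : ∀ i, β i := fun i => if i ∈ G₀ then t i else 0 with htGdef
  have htG_S : tG ∈ S := (mem_range_φmap_iff tG).mpr ⟨G₀, fun i hi => if_neg hi⟩
  set t'' : ∀ i, β i := t - tG with ht''def
  have ht''X : t'' ∈ X := X.sub_mem ht (hX.1 htG_S)
  have key : ∀ r : R, r • t'' ∈ S → r • t'' = 0 := by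
    intro r hr
    have hrt : r • t ∈ S := by
      have h1 := S.add_mem hr (S.smul_mem r htG_S)
      have h2 : r • t'' + r • tG = r • t := by rw [ht''def, smul_sub]; abel
      rwa [h2] at h1
    obtain ⟨G, hG⟩ := (mem_range_φmap_iff (r • t)).mp hrt
    have hrann : r ∈ ann G := by
      rw [mem_ann]
      intro i hi
      simpa using hG i hi
    have hrG₀ : r ∈ ann G₀ := hGmax G hrann
    funext i
    by_cases hi : i ∈ G₀
    · simp [ht''def, htGdef, if_pos hi]
    · have h1 : r • t i = 0 := (mem_ann G₀ r).mp hrG₀ i hi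
      simp [ht''def, htGdef, if_neg hi, h1]
  have ht''0 : t'' = 0 := by
    by_contra hne
    have h1 : Submodule.span R {t''} ≤ X := (Submodule.span_singleton_le_iff_mem _ _).mpr ht''X
    have h2 : Submodule.span R {t''} ≠ ⊥ := by simpa [Submodule.span_singleton_eq_bot] using hne
    have h3 := hX.2 _ h1 h2
    obtain ⟨z, ⟨hzS, hzsp⟩, hz0⟩ := Submodule.exists_mem_ne_zero_of_ne_bot h3
    obtain ⟨r, rfl⟩ := Submodule.mem_span_singleton.mp hzsp
    exact hz0 (key r hzS)
  have : t = tG := by rw [← sub_eq_zero]; exact ht''0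
  rw [this]; exact htG_S

end Noeth

end C1Aux


open DirectSum in
theorem stmt_13 (R : Type u) [Ring R] [IsNoetherianRing R]
    (h : Preenveloping R (fun M : ModuleCat.{u} R => IsC1Module R M)) :
    ∀ (ι : Type u) (M : ι → ModuleCat.{u} R), (∀ i, IsC1Module R (M i)) →
      IsC1Module R (⨁ i, M i) := by
  intro ι M hM
  classical
  obtain ⟨E, g, hEC1, hfac⟩ := h (ModuleCat.of R (∀ i, ↥(M i)))
  have hproj : ∀ i, ∃ αi : E ⟶ M i,
      g ≫ αi = ModuleCat.ofHom (LinearMap.proj i : (∀ j, ↥(M j)) →ₗ[R] ↥(M i)) :=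
    fun i => hfac (M i) (hM i) _
  choose α hα using hproj
  let gl : (∀ i, ↥(M i)) →ₗ[R] ↥E := g.hom
  let αl : ↥E →ₗ[R] (∀ i, ↥(M i)) := LinearMap.pi (fun i => ((α i).hom : ↥E →ₗ[R] ↥(M i)))
  have hsec : ∀ x, αl (gl x) = x := by
    intro x
    funext i
    have h1 : (g ≫ α i).hom x = x i := by rw [hα i]; rfl
    exact h1
  have hinj : Function.Injective gl := by
    intro a b hab
    have := congrArg αl hab
    rwa [hsec, hsec] at this
  have hcompl : IsCompl (LinearMap.range gl) (LinearMap.ker αl) := by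
    constructor
    · rw [disjoint_iff, eq_bot_iff]
      rintro x ⟨⟨y, rfl⟩, hx2⟩
      have hx2' : αl (gl y) = 0 := hx2
      have hy0 : y = 0 := by rw [← hsec y, hx2']
      rw [Submodule.mem_bot, hy0, map_zero]
    · rw [codisjoint_iff, eq_top_iff]
      rintro x -
      refine Submodule.mem_sup.mpr ⟨gl (αl x), ⟨αl x, rfl⟩, x - gl (αl x), ?_, by abel⟩
      rw [LinearMap.mem_ker, map_sub, hsec, sub_self]
  have hrangeC1 : IsC1Module R ↥(LinearMap.range gl) := isC1_summand hEC1 _ _ hcompl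
  have hPC1 : IsC1Module R (∀ i, ↥(M i)) :=
    isC1_of_equiv (LinearEquiv.ofInjective gl hinj).symm hrangeC1
  obtain ⟨D, ⟨D', hDD'⟩, hessD⟩ :=
    hPC1 (LinearMap.range (φmap (R := R) (β := fun i => ↥(M i))))
  have hDS := directSum_closed D hessD
  rw [hDS] at hDD'
  have hSC1 : IsC1Module R ↥(LinearMap.range (φmap (R := R) (β := fun i => ↥(M i)))) :=
    isC1_summand hPC1 _ _ hDD'
  have hφinj : Function.Injective (φmap (R := R) (β := fun i => ↥(M i))) := by
    intro a b hab
    exact DFunLike.ext a b fun i => congrFun hab i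
  exact isC1_of_equiv (LinearEquiv.ofInjective _ hφinj).symm hSC1
end

section
/- Let R be a commutative ring that decomposes into a finite ring direct product R = R_0 × ... × R_{m-1}, where each R_i is a local artinian principal ideal ring whose composition length as a module over itself is at most 2. Then every R-module is a C1-module. -/
universe u v

open CategoryTheory

namespace Stmt15Aux

variable {R : Type u} [CommRing R] {M : Type v} [AddCommGroup M] [Module R M]

/-- Every nonzero submodule contains a nonzero element killed by `t` (when `t*t = 0`). -/
lemma exists_soc (t : R) (ht : t * t = 0) (K : Submodule R M) (hK : K ≠ ⊥) :
    ∃ z ∈ K, z ≠ 0 ∧ t • z = 0 := by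
  obtain ⟨z, hzK, hz0⟩ := Submodule.exists_mem_ne_zero_of_ne_bot hK
  by_cases h : t • z = 0
  · exact ⟨z, hzK, hz0, h⟩
  · exact ⟨t • z, K.smul_mem t hzK, h, by rw [smul_smul, ht, zero_smul]⟩

/-- Complements exist inside submodules annihilated by `t`. -/
lemma compl_in (t : R) [IsSemisimpleRing (R ⧸ Ideal.span {t})]
    (P Q : Submodule R M) (hPQ : P ≤ Q) (hQ : ∀ x ∈ Q, t • x = 0) :
    ∃ C : Submodule R M, C ≤ Q ∧ P ⊓ C = ⊥ ∧ P ⊔ C = Q := by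
  classical
  set I : Ideal R := Ideal.span {t} with hI
  have htor : Module.IsTorsionBySet R (↥Q) (I : Set R) := by
    rintro x ⟨a, ha⟩
    obtain ⟨c, hc⟩ := Ideal.mem_span_singleton'.mp ha
    ext
    show a • (x : M) = 0
    rw [← hc, mul_smul]
    rw [hQ _ x.2, smul_zero]
  letI : Module (R ⧸ I) ↥Q := htor.module
  -- transfer submodules between the two scalar rings
  let toBar : Submodule R ↥Q → Submodule (R ⧸ I) ↥Q := fun p =>
    { carrier := p
      add_mem' := fun ha hb => p.add_mem ha hb
      zero_mem' := p.zero_mem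
      smul_mem' := by
        rintro ⟨r⟩ x hx
        show (Ideal.Quotient.mk I r) • x ∈ p
        rw [htor.mk_smul]
        exact p.smul_mem r hx }
  let toR : Submodule (R ⧸ I) ↥Q → Submodule R ↥Q := fun p =>
    { carrier := p
      add_mem' := fun ha hb => p.add_mem ha hb
      zero_mem' := p.zero_mem
      smul_mem' := fun r x hx => by
        have := p.smul_mem (Ideal.Quotient.mk I r) hx
        rwa [htor.mk_smul] at this }
  have hmem_toBar : ∀ (p : Submodule R ↥Q) (x : ↥Q), x ∈ toBar p ↔ x ∈ p := fun _ _ => Iff.rfl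
  have hmem_toR : ∀ (p : Submodule (R ⧸ I) ↥Q) (x : ↥Q), x ∈ toR p ↔ x ∈ p := fun _ _ => Iff.rfl
  set P' : Submodule R ↥Q := Submodule.comap Q.subtype P with hP'
  obtain ⟨K, hK⟩ := exists_isCompl (toBar P')
  set C : Submodule R M := Submodule.map Q.subtype (toR K) with hC
  have hCQ : C ≤ Q := by
    rintro x ⟨y, _, rfl⟩; exact y.2
  refine ⟨C, hCQ, ?_, ?_⟩
  · -- disjoint
    apply eq_bot_iff.mpr
    rintro x ⟨hxP, hxC⟩
    obtain ⟨y, hyK, rfl⟩ := hxC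
    have hyP' : y ∈ toBar P' := by
      show y ∈ P'
      simpa [hP', Submodule.mem_comap] using hxP
    have : y ∈ (⊥ : Submodule (R ⧸ I) ↥Q) := by
      rw [← hK.inf_eq_bot]
      exact ⟨hyP', hyK⟩
    rw [Submodule.mem_bot] at this
    simp [this]
  · -- sup
    apply le_antisymm
    · exact sup_le hPQ hCQ
    · intro x hx
      have : (⟨x, hx⟩ : ↥Q) ∈ toBar P' ⊔ K := by rw [hK.sup_eq_top]; trivial
      obtain ⟨y, hy, z, hz, hyz⟩ := Submodule.mem_sup.mp this
      have hxy : x = (y : M) + (z : M) :=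
        (congrArg Subtype.val hyz).symm
      rw [hxy]
      exact Submodule.add_mem _
        (Submodule.mem_sup_left (by simpa [hP', Submodule.mem_comap] using (hmem_toBar _ _).mp hy))
        (Submodule.mem_sup_right ⟨z, hz, rfl⟩)

/-- A good lift: any `p = t • x₀` has a lift `x` with `t • x = p` and `(ann p) • x ⊆ R p`. -/
lemma lift_good (t : R) (ht : t * t = 0) [IsSemisimpleRing (R ⧸ Ideal.span {t})]
    (p x₀ : M) (hp : t • x₀ = p) :
    ∃ x : M, t • x = p ∧ ∀ r : R, r • p = 0 → ∃ c : R, r • x = c • p := by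
  classical
  set I : Ideal R := Ideal.span {t} with hI
  set q : R →+* R ⧸ I := Ideal.Quotient.mk I with hq
  set A : Ideal R := LinearMap.ker (LinearMap.toSpanSingleton R M p) with hA
  have hmemA : ∀ r : R, r ∈ A ↔ r • p = 0 := by
    intro r
    simp [hA, LinearMap.mem_ker, LinearMap.toSpanSingleton_apply]
  have htp : t • p = 0 := by rw [← hp, smul_smul, ht, zero_smul]
  have hIA : I ≤ A := by
    intro r hr
    obtain ⟨c, hc⟩ := Ideal.mem_span_singleton'.mp hr
    rw [hmemA, ← hc, mul_smul, htp, smul_zero]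
  set Abar : Ideal (R ⧸ I) := A.map q with hAbar
  obtain ⟨K, hK⟩ := exists_isCompl Abar
  have h1 : (1 : R ⧸ I) ∈ Abar ⊔ K := by rw [hK.sup_eq_top]; trivial
  obtain ⟨ubar, hu, kbar, hk, huk⟩ := Submodule.mem_sup.mp h1
  obtain ⟨u, rfl⟩ := Ideal.Quotient.mk_surjective ubar
  -- every element of Abar is fixed by multiplication by `q u`
  have hfix : ∀ i ∈ Abar, i * q u = i := by
    intro i hi
    have hik : i * kbar = 0 := by
      have : i * kbar ∈ Abar ⊓ K := ⟨Ideal.mul_mem_right _ _ hi, Ideal.mul_mem_left _ _ hk⟩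
      rw [hK.inf_eq_bot] at this
      simpa using this
    have : i * (q u + kbar) = i := by rw [huk, mul_one]
    rw [mul_add, hik, add_zero] at this
    exact this
  -- u annihilates p
  have huA : u ∈ A := by
    rw [hAbar, Ideal.mem_map_iff_of_surjective q Ideal.Quotient.mk_surjective] at hu
    obtain ⟨a, haA, haq⟩ := hu
    have : u - a ∈ I := by
      rw [← Ideal.Quotient.eq_zero_iff_mem]
      show q (u - a) = 0
      rw [map_sub, haq, sub_self]
    have := hIA this
    have : (u - a) + a ∈ A := A.add_mem this haA
    simpa using this
  have hup : u • p = 0 := (hmemA u).mp huA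
  -- u is idempotent modulo I
  have hidem : ∃ d : R, d * t = u - u * u := by
    apply Ideal.mem_span_singleton'.mp
    rw [← Ideal.Quotient.eq_zero_iff_mem]
    show q (u - u * u) = 0
    have : q u * q u = q u := hfix (q u) hu
    rw [map_sub, map_mul, this, sub_self]
  obtain ⟨d, hd⟩ := hidem
  have hd : u - u * u = d * t := hd.symm
  refine ⟨x₀ - u • x₀, ?_, ?_⟩
  · rw [smul_sub, hp, smul_comm t u x₀, hp, hup, sub_zero]
  · intro r hr
    have hrA : r ∈ A := (hmemA r).mpr hr
    have hru : ∃ c : R, c * t = r - r * u := by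
      apply Ideal.mem_span_singleton'.mp
      rw [← Ideal.Quotient.eq_zero_iff_mem]
      show q (r - r * u) = 0
      have : q r * q u = q r := hfix (q r) (Ideal.mem_map_of_mem q hrA)
      rw [map_sub, map_mul, this, sub_self]
    obtain ⟨c, hc⟩ := hru
    have hc : r - r * u = c * t := hc.symm
    -- u • (x₀ - u • x₀) = d • p
    have hux : u • (x₀ - u • x₀) = d • p := by
      rw [smul_sub, smul_smul, ← sub_smul, hd, mul_smul, hp]
    have htx : t • (x₀ - u • x₀) = p := by
      rw [smul_sub, hp, smul_comm t u x₀, hp, hup, sub_zero]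
    refine ⟨r * d + c, ?_⟩
    have hr_split : r = r * u + c * t := by
      have : r - r * u = c * t := hc
      linear_combination this
    calc r • (x₀ - u • x₀) = (r * u + c * t) • (x₀ - u • x₀) := by rw [← hr_split]
      _ = (r * u) • (x₀ - u • x₀) + (c * t) • (x₀ - u • x₀) := add_smul _ _ _
      _ = r • (u • (x₀ - u • x₀)) + c • (t • (x₀ - u • x₀)) := by rw [mul_smul, mul_smul]
      _ = r • (d • p) + c • p := by rw [hux, htx]
      _ = (r * d) • p + c • p := by rw [mul_smul]
      _ = (r * d + c) • p := (add_smul _ _ _).symm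

/-- Tight lift: every submodule `P` of `t•M` is `t•X = P = X ∩ ker t` for some `X`. -/
lemma tight_lift (t : R) (ht : t * t = 0) [IsSemisimpleRing (R ⧸ Ideal.span {t})]
    (P : Submodule R M) (hPT : P ≤ LinearMap.range (LinearMap.lsmul R M t)) :
    ∃ X : Submodule R M, Submodule.map (LinearMap.lsmul R M t) X = P ∧
      X ⊓ LinearMap.ker (LinearMap.lsmul R M t) = P := by
  classical
  set τ : M →ₗ[R] M := LinearMap.lsmul R M t with hτ
  have hτ_apply : ∀ x : M, τ x = t • x := fun x => rfl
  set S : Submodule R M := LinearMap.ker τ with hS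
  set T : Submodule R M := LinearMap.range τ with hT
  have hTS : T ≤ S := by
    rintro x ⟨y, rfl⟩
    show τ (τ y) = 0
    rw [hτ_apply, hτ_apply, smul_smul, ht, zero_smul]
  have hSt : ∀ x ∈ S, t • x = 0 := fun x hx => hx
  have hPS : P ≤ S := le_trans hPT hTS
  set 𝒮 : Set (Submodule R M) := {X | Submodule.map τ X ≤ P ∧ X ⊓ S ≤ P} with h𝒮
  have hbot : (⊥ : Submodule R M) ∈ 𝒮 := by
    constructor
    · rw [Submodule.map_bot]; exact bot_le
    · rw [bot_inf_eq]; exact bot_le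
  have hchain : ∀ c ⊆ 𝒮, IsChain (· ≤ ·) c → ∀ y ∈ c, ∃ ub ∈ 𝒮, ∀ z ∈ c, z ≤ ub := by
    intro c hc hchain y hy
    haveI : Nonempty c := ⟨⟨y, hy⟩⟩
    refine ⟨sSup c, ⟨?_, ?_⟩, fun z hz => le_sSup hz⟩
    · rw [sSup_eq_iSup', Submodule.map_iSup]
      exact iSup_le fun X => (hc X.2).1
    · rintro z ⟨hz1, hz2⟩
      rw [sSup_eq_iSup'] at hz1
      obtain ⟨X, hX⟩ := (Submodule.mem_iSup_of_directed _ hchain.directedOn.directed_val).mp hz1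
      exact (hc X.2).2 ⟨hX, hz2⟩
  obtain ⟨X, -, hXmax⟩ := zorn_le_nonempty₀ 𝒮 hchain ⊥ hbot
  have hX𝒮 : X ∈ 𝒮 := hXmax.prop
  -- first key claim: map τ X = P
  have hmap : Submodule.map τ X = P := by
    by_contra hne
    obtain ⟨C, hCP, hCdisj, hCsup⟩ := compl_in t (Submodule.map τ X) P hX𝒮.1
      (fun x hx => hSt x (hPS hx))
    have hCne : C ≠ ⊥ := by
      intro hCbot
      rw [hCbot, sup_bot_eq] at hCsup
      exact hne hCsup
    obtain ⟨z, hzC, hz0⟩ := Submodule.exists_mem_ne_zero_of_ne_bot hCne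
    have hzP : z ∈ P := hCP hzC
    obtain ⟨x₀, hx₀⟩ := hPT hzP
    obtain ⟨x, hx1, hx2⟩ := lift_good t ht z x₀ hx₀
    set X' : Submodule R M := X ⊔ Submodule.span R {x} with hX'
    have hX'𝒮 : X' ∈ 𝒮 := by
      constructor
      · rw [hX', Submodule.map_sup, Submodule.map_span, Set.image_singleton]
        apply sup_le hX𝒮.1
        rw [Submodule.span_le, Set.singleton_subset_iff]
        show τ x ∈ P
        rw [show τ x = z from hx1]
        exact hzP
      · rintro w ⟨hw1, hw2⟩
        rw [hX'] at hw1
        obtain ⟨y, hy, v, hv, rfl⟩ := Submodule.mem_sup.mp hw1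
        obtain ⟨a, ha⟩ := Submodule.mem_span_singleton.mp hv
        have htw : t • (y + v) = 0 := hw2
        have hsplit : t • y + a • z = 0 := by
          have h1 : t • v = a • z := by rw [← ha, smul_comm t a x, hx1]
          rw [smul_add] at htw
          rw [← h1]
          exact htw
        have hτy : τ y ∈ Submodule.map τ X ⊓ C := by
          constructor
          · exact Submodule.mem_map_of_mem hy
          · show t • y ∈ C
            have : t • y = -(a • z) := by linear_combination (norm := module) hsplit
            rw [this]
            exact C.neg_mem (C.smul_mem a hzC)
        rw [hCdisj] at hτy
        have hτy0 : t • y = 0 := hτy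
        have hyP : y ∈ P := hX𝒮.2 ⟨hy, hτy0⟩
        have haz : a • z = 0 := by
          rw [hτy0, zero_add] at hsplit
          exact hsplit
        obtain ⟨c, hc⟩ := hx2 a haz
        have hvP : v ∈ P := by
          rw [← ha, hc]
          exact P.smul_mem c hzP
        exact P.add_mem hyP hvP
    have hX'le : X' ≤ X := hXmax.2 hX'𝒮 le_sup_left
    have hxX : x ∈ X := hX'le (le_sup_right (α := Submodule R M)
      (Submodule.mem_span_singleton_self x))
    have : z ∈ Submodule.map τ X ⊓ C := ⟨⟨x, hxX, hx1⟩, hzC⟩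
    rw [hCdisj] at this
    exact hz0 this
  refine ⟨X, hmap, le_antisymm hX𝒮.2 ?_⟩
  intro z hz
  rw [← hmap] at hz
  obtain ⟨y, hy, rfl⟩ := hz
  exact ⟨X.smul_mem t hy, hTS ⟨y, rfl⟩⟩

/-- Main lemma: over a commutative ring with an element `t` with `t² = 0` and `R/(t)`
semisimple, every submodule of every module is essential in a direct summand. -/
theorem main_ext (t : R) (ht : t * t = 0) [IsSemisimpleRing (R ⧸ Ideal.span {t})]
    (N : Submodule R M) :
    ∃ D D' : Submodule R M, IsCompl D D' ∧ N ≤ D ∧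
      ∀ K : Submodule R M, K ≤ D → K ≠ ⊥ → N ⊓ K ≠ ⊥ := by
  classical
  set τ : M →ₗ[R] M := LinearMap.lsmul R M t with hτ
  set S : Submodule R M := LinearMap.ker τ with hS
  set T : Submodule R M := LinearMap.range τ with hT
  have hTS : T ≤ S := by
    rintro x ⟨y, rfl⟩
    show t • (t • y) = 0
    rw [smul_smul, ht, zero_smul]
  have hSt : ∀ x ∈ S, t • x = 0 := fun x hx => hx
  set A : Submodule R M := N ⊓ S with hA
  set V : Submodule R M := A ⊓ T with hV
  set B : Submodule R M := Submodule.map τ N with hB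
  have hBV : B ≤ V := by
    rintro b ⟨n, hn, rfl⟩
    refine ⟨⟨N.smul_mem t hn, ?_⟩, ⟨n, rfl⟩⟩
    show t • (t • n) = 0
    rw [smul_smul, ht, zero_smul]
  have hAS : A ≤ S := inf_le_right
  have hVS : V ≤ S := le_trans inf_le_left hAS
  obtain ⟨P, hPV, hBP, hBPsup⟩ := compl_in t B V hBV (fun x hx => hSt x (hVS hx))
  obtain ⟨V'', hV''T, hVV'', hVV''sup⟩ :=
    compl_in t V T inf_le_right (fun x hx => hSt x (hTS hx))
  obtain ⟨U, hUS, hAVU, hAVUsup⟩ := compl_in t (A ⊔ V'') S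
    (sup_le hAS (le_trans hV''T hTS)) (fun x hx => hSt x hx)
  obtain ⟨X, hX1, hX2⟩ := tight_lift t ht P (le_trans hPV inf_le_right)
  obtain ⟨Y, hY1, hY2⟩ := tight_lift t ht V'' hV''T
  set D : Submodule R M := N ⊔ X with hD
  set D' : Submodule R M := Y ⊔ U with hD'
  have hPA : P ≤ A := le_trans hPV inf_le_left
  have hV''Y : V'' ≤ Y := by
    rw [← hY1]
    rintro v ⟨y, hy, rfl⟩
    exact Y.smul_mem t hy
  -- socle of D is A
  have hDS : D ⊓ S = A := by
    apply le_antisymm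
    · rintro z ⟨hz1, hz2⟩
      obtain ⟨n, hn, x, hx, rfl⟩ := Submodule.mem_sup.mp hz1
      have h0 : t • n + t • x = 0 := by
        have : t • (n + x) = 0 := hz2
        rwa [smul_add] at this
      have hτxP : t • x ∈ P := by rw [← hX1]; exact ⟨x, hx, rfl⟩
      have hτn : t • n ∈ B ⊓ P := by
        refine ⟨⟨n, hn, rfl⟩, ?_⟩
        have : t • n = -(t • x) := by linear_combination (norm := module) h0
        rw [this]
        exact P.neg_mem hτxP
      rw [hBP] at hτn
      have hn0 : t • n = 0 := hτn
      have hx0 : t • x = 0 := by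
        rw [hn0, zero_add] at h0
        exact h0
      have hnA : n ∈ A := ⟨hn, hn0⟩
      have hxA : x ∈ A := hPA (by rw [← hX2]; exact ⟨hx, hx0⟩)
      exact A.add_mem hnA hxA
    · exact le_inf (le_trans inf_le_left le_sup_left) inf_le_right
  -- socle of D' is V'' ⊔ U
  have hD'S : D' ⊓ S = V'' ⊔ U := by
    apply le_antisymm
    · rintro z ⟨hz1, hz2⟩
      obtain ⟨y, hy, u, hu, rfl⟩ := Submodule.mem_sup.mp hz1
      have hu0 : t • u = 0 := hSt u (hUS hu)
      have hy0 : t • y = 0 := by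
        have : t • (y + u) = 0 := hz2
        rw [smul_add, hu0, add_zero] at this
        exact this
      have hyV'' : y ∈ V'' := by rw [← hY2]; exact ⟨hy, hy0⟩
      exact Submodule.add_mem _ (Submodule.mem_sup_left hyV'') (Submodule.mem_sup_right hu)
    · apply sup_le
      · exact le_inf (le_trans hV''Y le_sup_left) (le_trans hV''T hTS)
      · exact le_inf le_sup_right hUS
  -- essentiality of N in D
  have hess : ∀ K : Submodule R M, K ≤ D → K ≠ ⊥ → N ⊓ K ≠ ⊥ := by
    intro K hKD hK hbot
    obtain ⟨z, hzK, hz0, hzt⟩ := exists_soc t ht K hK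
    have hzA : z ∈ A := by rw [← hDS]; exact ⟨hKD hzK, hzt⟩
    have : z ∈ N ⊓ K := ⟨hzA.1, hzK⟩
    rw [hbot] at this
    exact hz0 this
  -- disjointness
  have hdisj : D ⊓ D' = ⊥ := by
    by_contra hne
    obtain ⟨z, hzDD, hz0, hzt⟩ := exists_soc t ht (D ⊓ D') hne
    have hzA : z ∈ A := by rw [← hDS]; exact ⟨hzDD.1, hzt⟩
    have hzW : z ∈ V'' ⊔ U := by rw [← hD'S]; exact ⟨hzDD.2, hzt⟩
    obtain ⟨v, hv, u, hu, huv⟩ := Submodule.mem_sup.mp hzW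
    have hu' : u ∈ (A ⊔ V'') ⊓ U := by
      refine ⟨?_, hu⟩
      have : u = z - v := by linear_combination (norm := module) huv
      rw [this]
      exact Submodule.sub_mem _ (Submodule.mem_sup_left hzA) (Submodule.mem_sup_right hv)
    rw [hAVU] at hu'
    have hu0 : u = 0 := hu'
    have hzv : z = v := by rw [← huv, hu0, add_zero]
    have : z ∈ V ⊓ V'' := ⟨⟨hzA, hV''T (hzv ▸ hv)⟩, hzv ▸ hv⟩
    rw [hVV''] at this
    exact hz0 this
  -- codisjointness
  have hsup : D ⊔ D' = ⊤ := by
    rw [eq_top_iff]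
    rintro z -
    have hτz : τ z ∈ V ⊔ V'' := by rw [hVV''sup]; exact ⟨z, rfl⟩
    obtain ⟨v, hv, w, hw, hvw⟩ := Submodule.mem_sup.mp hτz
    rw [← hBPsup] at hv
    obtain ⟨b, hb, p, hp, hbp⟩ := Submodule.mem_sup.mp hv
    obtain ⟨n, hn, hbn⟩ := hb
    rw [← hX1] at hp
    obtain ⟨x1, hx1X, hpx⟩ := hp
    rw [← hY1] at hw
    obtain ⟨y, hyY, hwy⟩ := hw
    have hz0S : z - n - x1 - y ∈ S := by
      have hτeq : τ z = τ n + τ x1 + τ y := by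
        rw [hbn, hpx, hwy, hbp, hvw]
      show τ (z - n - x1 - y) = 0
      rw [map_sub, map_sub, map_sub, hτeq]
      abel
    have hSsub : S ≤ D ⊔ D' := by
      rw [← hAVUsup]
      apply sup_le (sup_le ?_ ?_) ?_
      · exact le_trans (le_trans inf_le_left le_sup_left) le_sup_left
      · exact le_trans (le_trans hV''Y le_sup_left) le_sup_right
      · exact le_trans le_sup_right le_sup_right
    have hzeq : z = (z - n - x1 - y) + n + x1 + y := by abel
    rw [hzeq]
    exact Submodule.add_mem _ (Submodule.add_mem _ (Submodule.add_mem _ (hSsub hz0S)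
      (Submodule.mem_sup_left (Submodule.mem_sup_left hn)))
      (Submodule.mem_sup_left (Submodule.mem_sup_right hx1X)))
      (Submodule.mem_sup_right (Submodule.mem_sup_left hyY))
  exact ⟨D, D', ⟨disjoint_iff.mpr hdisj, codisjoint_iff.mpr hsup⟩, le_sup_left, hess⟩

/-- Each local artinian PIR of length ≤ 2 has `m = (a)` with `a² = 0`. -/
lemma comp_exists (A : Type u) [CommRing A] [IsLocalRing A] [IsArtinianRing A]
    [IsPrincipalIdealRing A]
    (hlen : ∃ N : Submodule A A, (IsSimpleModule A N ∨ N = ⊥) ∧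
      (IsSimpleModule A (A ⧸ N) ∨ N = ⊤)) :
    ∃ a : A, a * a = 0 ∧ Ideal.span {a} = IsLocalRing.maximalIdeal A := by
  classical
  set m : Ideal A := IsLocalRing.maximalIdeal A with hm
  have hmbot : m = ⊥ → m * m = ⊥ := fun h => by rw [h, Ideal.mul_bot]
  have hm2 : m * m = ⊥ := by
    obtain ⟨Nsub, hN1, hN2⟩ := hlen
    rcases hN2 with hN2 | hN2
    · -- quotient simple : Nsub is the maximal ideal
      have hco : IsCoatom Nsub := isSimpleModule_iff_isCoatom.mp hN2
      have hNmax : Ideal.IsMaximal Nsub := Ideal.isMaximal_def.mpr hco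
      have hNm : Nsub = m := IsLocalRing.eq_maximalIdeal hNmax
      rcases hN1 with hN1 | hN1
      · -- m is simple
        rw [hNm] at hN1
        have hatom : IsAtom (m : Submodule A A) := isSimpleModule_iff_isAtom.mp hN1
        have hle : m * m ≤ m := Ideal.mul_le_left
        rcases lt_or_eq_of_le hle with hlt | heq
        · exact hatom.2 _ hlt
        · exfalso
          obtain ⟨n, hn⟩ := IsArtinianRing.isNilpotent_jacobson_bot (R := A)
          have hjac : (⊥ : Ideal A).jacobson = m :=
            IsLocalRing.jacobson_eq_maximalIdeal ⊥ bot_ne_top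
          rw [hjac] at hn
          have hpow : ∀ k : ℕ, m ^ (k + 1) = m := by
            intro k
            induction k with
            | zero => exact pow_one m
            | succ k ih => rw [pow_succ, ih]; exact heq
          cases n with
          | zero =>
            rw [pow_zero] at hn
            have h1 : (⊤ : Ideal A) = ⊥ := by
              rw [← Ideal.one_eq_top, hn]
              rfl
            exact hatom.1 (le_bot_iff.mp (h1 ▸ (le_top : m ≤ ⊤)))
          | succ k =>
            rw [hpow k] at hn
            exact hatom.1 hn
      · exact hmbot (by rw [← hNm, hN1])
    · -- Nsub = ⊤
      rcases hN1 with hN1 | hN1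
      · rw [hN2] at hN1
        haveI : IsSimpleModule A A := IsSimpleModule.congr Submodule.topEquiv.symm
        rcases eq_bot_or_eq_top (m : Submodule A A) with h | h
        · exact hmbot h
        · exact absurd h (IsLocalRing.maximalIdeal.isMaximal A).ne_top
      · exfalso
        rw [hN2] at hN1
        exact top_ne_bot hN1
  obtain ⟨a, ha⟩ := (IsPrincipalIdealRing.principal m).principal
  have haa : a * a = 0 := by
    have hamem : a ∈ m := ha ▸ Submodule.mem_span_singleton_self a
    have : a * a ∈ m * m := Ideal.mul_mem_mul hamem hamem
    rw [hm2] at this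
    exact this
  exact ⟨a, haa, ha.symm⟩

/-- The quotient of `R` by the span of the assembled element is semisimple. -/
lemma semis {R : Type u} [CommRing R] {m : ℕ} {Ri : Fin m → Type u}
    [inst : ∀ i, CommRing (Ri i)] (e : R ≃+* ∀ i, Ri i)
    (a : ∀ i, Ri i) (hmax : ∀ i, (Ideal.span {a i}).IsMaximal) :
    IsSemisimpleRing (R ⧸ Ideal.span {e.symm a}) := by
  classical
  letI : ∀ i, Field (Ri i ⧸ Ideal.span {a i}) := fun i => Ideal.Quotient.field _
  haveI : ∀ i, IsSemisimpleRing (Ri i ⧸ Ideal.span {a i}) := fun i => inferInstance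
  haveI : IsSemisimpleRing (∀ i, Ri i ⧸ Ideal.span {a i}) := inferInstance
  set φ : R →+* ∀ i, Ri i ⧸ Ideal.span {a i} :=
    (Pi.ringHom (fun i => (Ideal.Quotient.mk (Ideal.span {a i})).comp
      (Pi.evalRingHom Ri i))).comp (e : R →+* ∀ i, Ri i) with hφ
  have hφ_apply : ∀ (r : R) (i : Fin m),
      φ r i = Ideal.Quotient.mk (Ideal.span {a i}) ((e r) i) := fun r i => rfl
  have hsurj : Function.Surjective φ := by
    intro y
    choose x hx using fun i => Ideal.Quotient.mk_surjective (y i)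
    refine ⟨e.symm x, ?_⟩
    funext i
    rw [hφ_apply, e.apply_symm_apply]
    exact hx i
  have hker : RingHom.ker φ = Ideal.span {e.symm a} := by
    ext r
    rw [RingHom.mem_ker]
    constructor
    · intro hr
      have hri : ∀ i, (e r) i ∈ Ideal.span {a i} := by
        intro i
        have h0 : φ r i = 0 := by rw [hr]; rfl
        rw [hφ_apply] at h0
        exact Ideal.Quotient.eq_zero_iff_mem.mp h0
      choose c hc using fun i => Ideal.mem_span_singleton'.mp (hri i)
      rw [Ideal.mem_span_singleton']
      refine ⟨e.symm c, ?_⟩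
      apply e.injective
      rw [map_mul, e.apply_symm_apply, e.apply_symm_apply]
      funext i
      exact hc i
    · intro hr
      obtain ⟨c, hc⟩ := Ideal.mem_span_singleton'.mp hr
      have her : e r = e c * a := by rw [← hc, map_mul, e.apply_symm_apply]
      funext i
      show φ r i = 0
      rw [hφ_apply, Ideal.Quotient.eq_zero_iff_mem]
      refine Ideal.mem_span_singleton'.mpr ⟨(e c) i, ?_⟩
      exact (congrFun her i).symm
  have equiv := (Ideal.quotEquivOfEq hker.symm).trans
    (RingHom.quotientKerEquivOfSurjective hsurj)
  exact equiv.symm.isSemisimpleRing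

end Stmt15Aux


theorem stmt_15 (R : Type u) [CommRing R]
    (h : ∃ (m : ℕ) (Ri : Fin m → Type u) (inst : ∀ i, CommRing (Ri i)),
      letI := inst
      Nonempty (R ≃+* ∀ i, Ri i) ∧
        ∀ i, IsLocalRing (Ri i) ∧ IsArtinianRing (Ri i) ∧ IsPrincipalIdealRing (Ri i) ∧
          CompositionLengthLE2 (Ri i) (Ri i)) :
    ∀ (M : Type u) [AddCommGroup M] [Module R M], IsC1Module R M := by
  obtain ⟨m, Ri, inst, hh⟩ := h
  obtain ⟨⟨e⟩, hprops⟩ := hh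
  intro M _ _ N
  haveI : ∀ i, IsLocalRing (Ri i) := fun i => (hprops i).1
  haveI : ∀ i, IsArtinianRing (Ri i) := fun i => (hprops i).2.1
  haveI : ∀ i, IsPrincipalIdealRing (Ri i) := fun i => (hprops i).2.2.1
  have hcomp := fun i => Stmt15Aux.comp_exists (Ri i) ((hprops i).2.2.2)
  choose a ha0 hspan using hcomp
  have haa : a * a = 0 := funext fun i => ha0 i
  set t : R := e.symm a with htdef
  have ht : t * t = 0 := by rw [htdef, ← map_mul, haa, map_zero]
  have hmax : ∀ i, (Ideal.span {a i}).IsMaximal := fun i =>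
    (hspan i) ▸ (IsLocalRing.maximalIdeal.isMaximal (Ri i))
  haveI : IsSemisimpleRing (R ⧸ Ideal.span {t}) := Stmt15Aux.semis e a hmax
  obtain ⟨D, D', hcompl, hND, hess⟩ := Stmt15Aux.main_ext t ht N
  exact ⟨D, ⟨D', hcompl⟩, hND, hess⟩
end
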